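/- arXiv:0901.3506 — 10 statements merged into one kernel-verified Lean document; each statement's English description precedes it below -/
import Mathlib

section
/- Let A, B, C be Banach algebras and let T₁ : A → B and T₂ : B → C be bounded cf-homomorphisms. Then the composite T₂ ∘ T₁ : A → C is a bounded cf-homomorphism. -/
open Metric Pointwise

/-- `T` is a cf-homomorphism: its failure of multiplicativity
`S_T(a,b) = T a * T b - T (a*b)` is a compact bilinear map, i.e. the norm closure of the
image of the product of the open unit balls under `S_T` is compact. -/
def IsCfHomomorphism {A B : Type*}
    [NonUnitalNormedRing A] [NormedSpace ℂ A]
    [NonUnitalNormedRing B] [NormedSpace ℂ B]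
    (T : A →L[ℂ] B) : Prop :=
  IsCompact (closure
    (Set.image2 (fun a b => T a * T b - T (a * b)) (ball (0 : A) 1) (ball (0 : A) 1)))

/-- the composite of two bounded cf-homomorphisms between Banach algebras is a
bounded cf-homomorphism. -/
theorem isCfHomomorphism_comp {A B C : Type*}
    [NonUnitalNormedRing A] [NormedSpace ℂ A] [IsScalarTower ℂ A A] [SMulCommClass ℂ A A]
    [CompleteSpace A]
    [NonUnitalNormedRing B] [NormedSpace ℂ B] [IsScalarTower ℂ B B] [SMulCommClass ℂ B B]
    [CompleteSpace B]
    [NonUnitalNormedRing C] [NormedSpace ℂ C] [IsScalarTower ℂ C C] [SMulCommClass ℂ C C]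
    [CompleteSpace C]
    (T₁ : A →L[ℂ] B) (T₂ : B →L[ℂ] C)
    (h₁ : IsCfHomomorphism T₁) (h₂ : IsCfHomomorphism T₂) :
    IsCfHomomorphism (T₂.comp T₁) := by
  set r : ℝ := ‖T₁‖ + 1 with hr
  have hr0 : (0:ℝ) < r := by positivity
  set c : ℂ := (r : ℂ) with hc
  have hc0 : c ≠ 0 := by
    simp only [hc, Ne, Complex.ofReal_eq_zero]
    exact hr0.ne'
  set K₁ := closure (Set.image2 (fun a b => T₁ a * T₁ b - T₁ (a * b))
      (ball (0 : A) 1) (ball (0 : A) 1)) with hK₁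
  set K₂ := closure (Set.image2 (fun a b => T₂ a * T₂ b - T₂ (a * b))
      (ball (0 : B) 1) (ball (0 : B) 1)) with hK₂
  have hL : IsCompact (((c ^ 2) • K₂) + (T₂ '' K₁)) :=
    (h₂.smul (c ^ 2)).add (h₁.image T₂.continuous)
  refine hL.closure_of_subset ?_
  rintro _ ⟨a, ha, b, hb, rfl⟩
  have hmem : ∀ x : A, x ∈ ball (0:A) 1 → c⁻¹ • T₁ x ∈ ball (0:B) 1 := by
    intro x hx
    rw [mem_ball_zero_iff] at hx ⊢
    rw [norm_smul, norm_inv]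
    have hTx : ‖T₁ x‖ < r := by
      calc ‖T₁ x‖ ≤ ‖T₁‖ * ‖x‖ := T₁.le_opNorm x
        _ ≤ ‖T₁‖ * 1 := by
            exact mul_le_mul_of_nonneg_left hx.le (norm_nonneg _)
        _ < r := by rw [mul_one, hr]; linarith
    have hcn : ‖c‖ = r := by simp [hc, abs_of_pos hr0]
    rw [hcn, inv_mul_lt_one₀ hr0]
    exact hTx
  refine ⟨c ^ 2 • (T₂ (c⁻¹ • T₁ a) * T₂ (c⁻¹ • T₁ b) - T₂ ((c⁻¹ • T₁ a) * (c⁻¹ • T₁ b))),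
    Set.smul_mem_smul_set (subset_closure
      (Set.mem_image2_of_mem (hmem a ha) (hmem b hb))),
    T₂ (T₁ a * T₁ b - T₁ (a * b)),
    Set.mem_image_of_mem _ (subset_closure (Set.mem_image2_of_mem ha hb)), ?_⟩
  simp only [map_smul, smul_mul_smul_comm, smul_sub, smul_smul, map_sub,
    ContinuousLinearMap.coe_comp', Function.comp_apply]
  have : c ^ 2 * (c⁻¹ * c⁻¹) = 1 := by field_simp
  rw [this, one_smul]
  simp only [one_smul]
  abel
end

section
/- Let A, B, C be Banach algebras and let T₁ : A → B and T₂ : B → C be bounded wcf-homomorphisms. Then the composite T₂ ∘ T₁ : A → C is a bounded wcf-homomorphism. -/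
open Metric

/-- The weak topology on a normed space over `ℂ` (or any `RCLike` field) is Hausdorff. -/
instance weakSpaceT2 {𝕜 E : Type*} [RCLike 𝕜] [NormedAddCommGroup E] [NormedSpace 𝕜 E] :
    T2Space (WeakSpace 𝕜 E) := by
  have hinj : Function.Injective (⇑(topDualPairing 𝕜 E).flip) := by
    intro x y hxy
    by_contra h
    obtain ⟨f, hf⟩ := SeparatingDual.exists_ne_zero' (R := 𝕜) (x - y) (sub_ne_zero.mpr h)
    apply hf
    have : (topDualPairing 𝕜 E).flip x f = (topDualPairing 𝕜 E).flip y f := by rw [hxy]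
    simp only [topDualPairing, LinearMap.flip_apply, ContinuousLinearMap.coeLM_apply] at this
    rw [map_sub]
    exact sub_eq_zero_of_eq this
  exact (WeakBilin.isEmbedding hinj).t2Space


/-- `T` is a wcf-homomorphism: its failure of multiplicativity
`S_T(a,b) = T a * T b - T (a*b)` is a weakly compact bilinear map, i.e. the closure, in the
weak topology of the codomain, of the image of the product of the open unit balls under `S_T`
is weakly compact. -/
def IsWcfHomomorphism {A B : Type*}
    [NonUnitalNormedRing A] [NormedSpace ℂ A]
    [NonUnitalNormedRing B] [NormedSpace ℂ B]
    (T : A →L[ℂ] B) : Prop :=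
  IsCompact (closure ((toWeakSpace ℂ B) ''
    (Set.image2 (fun a b => T a * T b - T (a * b)) (ball (0 : A) 1) (ball (0 : A) 1))))

/-- the composite of two bounded wcf-homomorphisms between Banach algebras is a
bounded wcf-homomorphism. -/
theorem isWcfHomomorphism_comp {A B C : Type*}
    [NonUnitalNormedRing A] [NormedSpace ℂ A] [IsScalarTower ℂ A A] [SMulCommClass ℂ A A]
    [CompleteSpace A]
    [NonUnitalNormedRing B] [NormedSpace ℂ B] [IsScalarTower ℂ B B] [SMulCommClass ℂ B B]
    [CompleteSpace B]
    [NonUnitalNormedRing C] [NormedSpace ℂ C] [IsScalarTower ℂ C C] [SMulCommClass ℂ C C]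
    [CompleteSpace C]
    (T₁ : A →L[ℂ] B) (T₂ : B →L[ℂ] C)
    (h₁ : IsWcfHomomorphism T₁) (h₂ : IsWcfHomomorphism T₂) :
    IsWcfHomomorphism (T₂.comp T₁) := by
  classical
  set c : ℝ := max ‖T₁‖ 1 with hc
  have hc1 : (1:ℝ) ≤ c := le_max_right _ _
  have hcpos : (0:ℝ) < c := lt_of_lt_of_le one_pos hc1
  have hcne : ((c:ℂ)) ≠ 0 := by exact_mod_cast ne_of_gt hcpos
  set K₁ : Set (WeakSpace ℂ B) := closure ((toWeakSpace ℂ B) ''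
    (Set.image2 (fun a b => T₁ a * T₁ b - T₁ (a * b)) (ball (0 : A) 1) (ball (0 : A) 1)))
  set K₂ : Set (WeakSpace ℂ C) := closure ((toWeakSpace ℂ C) ''
    (Set.image2 (fun a b => T₂ a * T₂ b - T₂ (a * b)) (ball (0 : B) 1) (ball (0 : B) 1)))
  set L : WeakSpace ℂ B →L[ℂ] WeakSpace ℂ C := WeakSpace.map T₂
  set K : Set (WeakSpace ℂ C) :=
    Set.image2 (fun x y => ((c:ℂ)^2) • x + y) K₂ (L '' K₁) with hKdef
  haveI : ContinuousSMul ℂ (WeakSpace ℂ C) :=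
    inferInstanceAs (ContinuousSMul ℂ (WeakBilin (topDualPairing ℂ C).flip))
  have hK : IsCompact K := by
    rw [hKdef, ← Set.image_prod]
    exact (h₂.prod (h₁.image L.continuous)).image
      ((continuous_fst.const_smul ((c:ℂ)^2)).add continuous_snd)
  have hsub : (toWeakSpace ℂ C) ''
      (Set.image2 (fun a b => (T₂.comp T₁) a * (T₂.comp T₁) b - (T₂.comp T₁) (a * b))
        (ball (0 : A) 1) (ball (0 : A) 1)) ⊆ K := by
    rintro _ ⟨x, ⟨a, ha, b, hb, rfl⟩, rfl⟩
    have hnorm : ∀ z : A, z ∈ ball (0:A) 1 → ((c:ℂ)⁻¹ • T₁ z) ∈ ball (0:B) 1 := by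
      intro z hz
      rw [mem_ball_zero_iff] at hz ⊢
      have h1 : ‖T₁ z‖ < c := by
        calc ‖T₁ z‖ ≤ ‖T₁‖ * ‖z‖ := T₁.le_opNorm z
        _ ≤ c * ‖z‖ := by gcongr; exact le_max_left _ _
        _ < c * 1 := by gcongr
        _ = c := mul_one c
      rw [norm_smul]
      have : ‖((c:ℂ)⁻¹)‖ = c⁻¹ := by
        rw [norm_inv]; norm_cast; simp [abs_of_pos hcpos]
      rw [this]
      calc c⁻¹ * ‖T₁ z‖ < c⁻¹ * c := by gcongr
      _ = 1 := inv_mul_cancel₀ (ne_of_gt hcpos)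
    set u : B := (c:ℂ)⁻¹ • T₁ a
    set v : B := (c:ℂ)⁻¹ • T₁ b
    have hx₂ : (T₂ u * T₂ v - T₂ (u * v)) ∈
        Set.image2 (fun a b => T₂ a * T₂ b - T₂ (a * b)) (ball (0 : B) 1) (ball (0 : B) 1) :=
      Set.mem_image2_of_mem (hnorm a ha) (hnorm b hb)
    have hx₁ : (T₁ a * T₁ b - T₁ (a * b)) ∈
        Set.image2 (fun a b => T₁ a * T₁ b - T₁ (a * b)) (ball (0 : A) 1) (ball (0 : A) 1) :=
      Set.mem_image2_of_mem ha hb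
    have hw₂ : toWeakSpace ℂ C (T₂ u * T₂ v - T₂ (u * v)) ∈ K₂ :=
      subset_closure ⟨_, hx₂, rfl⟩
    have hw₁ : L (toWeakSpace ℂ B (T₁ a * T₁ b - T₁ (a * b))) ∈ L '' K₁ :=
      ⟨_, subset_closure ⟨_, hx₁, rfl⟩, rfl⟩
    refine Set.mem_image2.mpr ⟨_, hw₂, _, hw₁, ?_⟩
    have hL : L (toWeakSpace ℂ B (T₁ a * T₁ b - T₁ (a * b)))
        = toWeakSpace ℂ C (T₂ (T₁ a * T₁ b - T₁ (a * b))) := rfl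
    rw [hL, ← map_smul, ← map_add]
    congr 1
    have key : ((c:ℂ)^2) • (T₂ u * T₂ v - T₂ (u * v)) + T₂ (T₁ a * T₁ b - T₁ (a * b))
        = T₂ (T₁ a) * T₂ (T₁ b) - T₂ (T₁ (a * b)) := by
      have h1 : T₂ u = (c:ℂ)⁻¹ • T₂ (T₁ a) := by simp [u, map_smul]
      have h2 : T₂ v = (c:ℂ)⁻¹ • T₂ (T₁ b) := by simp [v, map_smul]
      have h3 : u * v = ((c:ℂ)⁻¹ * (c:ℂ)⁻¹) • (T₁ a * T₁ b) := by
        simp [u, v, smul_mul_smul_comm]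
      rw [h1, h2, h3, map_smul, smul_sub, smul_smul, smul_mul_smul_comm, smul_smul]
      have hcc : (c:ℂ)^2 * ((c:ℂ)⁻¹ * (c:ℂ)⁻¹) = 1 := by
        field_simp
      rw [hcc, one_smul, one_smul, map_sub]
      abel
    simp only [ContinuousLinearMap.comp_apply]
    rw [key]
  exact hK.of_isClosed_subset isClosed_closure (closure_minimal hsub hK.isClosed)
end

section
/- Let A and B be Banach algebras and let T : A → B be a bijective bounded cf-homomorphism. Then the inverse map T⁻¹ : B → A is a bounded linear map and is a cf-homomorphism. -/
open Metric

/-- the inverse of a bijective bounded cf-homomorphism between Banach algebras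
is a bounded linear map and a cf-homomorphism. -/
theorem isCfHomomorphism_inverse {A B : Type*}
    [NonUnitalNormedRing A] [NormedSpace ℂ A] [IsScalarTower ℂ A A] [SMulCommClass ℂ A A]
    [CompleteSpace A]
    [NonUnitalNormedRing B] [NormedSpace ℂ B] [IsScalarTower ℂ B B] [SMulCommClass ℂ B B]
    [CompleteSpace B]
    (T : A →L[ℂ] B) (hbij : Function.Bijective T) (hT : IsCfHomomorphism T) :
    ∃ T' : B →L[ℂ] A,
      (∀ a : A, T' (T a) = a) ∧ (∀ b : B, T (T' b) = b) ∧ IsCfHomomorphism T' := by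
  have h1 : LinearMap.ker (T : A →ₗ[ℂ] B) = ⊥ := LinearMap.ker_eq_bot.mpr hbij.1
  have h2 : LinearMap.range (T : A →ₗ[ℂ] B) = ⊤ := LinearMap.range_eq_top.mpr hbij.2
  let e := ContinuousLinearEquiv.ofBijective T h1 h2
  set T' : B →L[ℂ] A := e.symm.toContinuousLinearMap with hT'def
  have heT : ∀ a : A, e a = T a := fun a => rfl
  have hTT' : ∀ a : A, T' (T a) = a := by
    intro a
    have := e.symm_apply_apply a
    simpa [heT, hT'def] using this
  have hT'T : ∀ b : B, T (T' b) = b := by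
    intro b
    have := e.apply_symm_apply b
    simpa [heT, hT'def] using this
  refine ⟨T', hTT', hT'T, ?_⟩
  -- setup
  set r : ℝ := ‖T'‖ + 1 with hrdef
  have hr0 : 0 < r := by positivity
  have hrne : ((r : ℂ)) ≠ 0 := by
    exact_mod_cast (Complex.ofReal_ne_zero.mpr hr0.ne')
  let f : B → A := fun z => -(((r : ℂ))^2 • T' z)
  have hfcont : Continuous f := by
    exact ((T'.continuous.const_smul _)).neg
  set K := closure (Set.image2 (fun a b => T a * T b - T (a * b))
      (ball (0 : A) 1) (ball (0 : A) 1)) with hKdef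
  have hKA : IsCompact K := hT
  have hsub : Set.image2 (fun x y => T' x * T' y - T' (x * y))
      (ball (0 : B) 1) (ball (0 : B) 1) ⊆ f '' K := by
    rintro z ⟨x, hx, y, hy, rfl⟩
    set a := T' x with hadef
    set b := T' y with hbdef
    have hnorm : ∀ w : B, w ∈ ball (0 : B) 1 → ‖T' w‖ < r := by
      intro w hw
      have h1 : ‖T' w‖ ≤ ‖T'‖ * ‖w‖ := T'.le_opNorm w
      have h2 : ‖w‖ < 1 := by simpa [mem_ball, dist_eq_norm] using hw
      calc ‖T' w‖ ≤ ‖T'‖ * ‖w‖ := h1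
        _ ≤ ‖T'‖ * 1 := by
            exact mul_le_mul_of_nonneg_left h2.le (norm_nonneg _)
        _ < r := by simp [hrdef]
    set a₀ : A := ((r : ℂ))⁻¹ • a with ha₀def
    set b₀ : A := ((r : ℂ))⁻¹ • b with hb₀def
    have hnorm₀ : ∀ c : A, ‖c‖ < r → ‖((r : ℂ))⁻¹ • c‖ < 1 := by
      intro c hc
      rw [norm_smul, norm_inv, Complex.norm_real, Real.norm_of_nonneg hr0.le]
      calc r⁻¹ * ‖c‖ < r⁻¹ * r := by
            exact mul_lt_mul_of_pos_left hc (inv_pos.mpr hr0)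
        _ = 1 := inv_mul_cancel₀ hr0.ne'
    have ha₀ : a₀ ∈ ball (0 : A) 1 := by
      simpa [mem_ball, dist_eq_norm] using hnorm₀ a (hnorm x hx)
    have hb₀ : b₀ ∈ ball (0 : A) 1 := by
      simpa [mem_ball, dist_eq_norm] using hnorm₀ b (hnorm y hy)
    refine ⟨T a₀ * T b₀ - T (a₀ * b₀), subset_closure ⟨a₀, ha₀, b₀, hb₀, rfl⟩, ?_⟩
    -- compute f applied to this element
    have hra : ((r : ℂ)) • a₀ = a := by
      rw [ha₀def, smul_smul, mul_inv_cancel₀ hrne, one_smul]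
    have hrb : ((r : ℂ)) • b₀ = b := by
      rw [hb₀def, smul_smul, mul_inv_cancel₀ hrne, one_smul]
    have hscale : ((r : ℂ))^2 • (T a₀ * T b₀ - T (a₀ * b₀)) = T a * T b - T (a * b) := by
      rw [← hra, ← hrb]
      simp only [map_smul, smul_mul_assoc, mul_smul_comm, smul_sub, smul_smul, sq]
    have hkey : -(T' (T a * T b - T (a * b))) = T' x * T' y - T' (x * y) := by
      have hTa : T a = x := hT'T x
      have hTb : T b = y := hT'T y
      rw [map_sub, hTa, hTb, hTT' (a * b)]
      abel
    show f (T a₀ * T b₀ - T (a₀ * b₀)) = T' x * T' y - T' (x * y)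
    calc f (T a₀ * T b₀ - T (a₀ * b₀))
        = -(T' (((r : ℂ))^2 • (T a₀ * T b₀ - T (a₀ * b₀)))) := by
          simp [f, map_smul]
      _ = -(T' (T a * T b - T (a * b))) := by rw [hscale]
      _ = T' x * T' y - T' (x * y) := hkey
  have himg : IsCompact (f '' K) := hKA.image hfcont
  exact himg.of_isClosed_subset isClosed_closure
    (closure_minimal hsub himg.isClosed)
end

section
/- Let A and B be Banach algebras and let T : A → B be a bijective bounded wcf-homomorphism. Then the inverse map T⁻¹ : B → A is a bounded linear map and is a wcf-homomorphism. -/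
open Metric

/-- the inverse of a bijective bounded wcf-homomorphism between Banach algebras
is a bounded linear map and a wcf-homomorphism. -/
theorem isWcfHomomorphism_inverse {A B : Type*}
    [NonUnitalNormedRing A] [NormedSpace ℂ A] [IsScalarTower ℂ A A] [SMulCommClass ℂ A A]
    [CompleteSpace A]
    [NonUnitalNormedRing B] [NormedSpace ℂ B] [IsScalarTower ℂ B B] [SMulCommClass ℂ B B]
    [CompleteSpace B]
    (T : A →L[ℂ] B) (hbij : Function.Bijective T) (hT : IsWcfHomomorphism T) :
    ∃ T' : B →L[ℂ] A,
      (∀ a : A, T' (T a) = a) ∧ (∀ b : B, T (T' b) = b) ∧ IsWcfHomomorphism T' := by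
  have hinj : LinearMap.ker (T : A →ₗ[ℂ] B) = ⊥ := (LinearMap.ker_eq_bot (f := (T : A →ₗ[ℂ] B))).mpr hbij.1
  have hsurj : LinearMap.range (T : A →ₗ[ℂ] B) = ⊤ := (LinearMap.range_eq_top (f := (T : A →ₗ[ℂ] B))).mpr hbij.2
  let e := ContinuousLinearEquiv.ofBijective T hinj hsurj
  have heT : ∀ a : A, e a = T a := fun a => rfl
  let T' : B →L[ℂ] A := e.symm
  have hTT' : ∀ b : B, T (T' b) = b := fun b => e.apply_symm_apply b
  have hT'T : ∀ a : A, T' (T a) = a := fun a => e.symm_apply_apply a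
  refine ⟨T', hT'T, hTT', ?_⟩
  -- the scaling constant
  set M : ℝ := ‖T'‖ with hM
  have hMpos : (0:ℝ) ≤ M := norm_nonneg _
  set s : ℝ := M + 1 with hs
  have hspos : (0:ℝ) < s := by positivity
  set c : ℂ := (s : ℂ) with hc
  have hcnorm : ‖c‖ = s := by simp [hc, abs_of_pos hspos]
  have hcne : c ≠ 0 := by
    simp only [hc, Ne, Complex.ofReal_eq_zero]
    exact ne_of_gt hspos
  -- the transfer map
  let L : B →L[ℂ] A := -((c ^ 2) • T')
  -- membership of scaled elements in the unit ball
  have hball : ∀ x : B, x ∈ ball (0:B) 1 → c⁻¹ • T' x ∈ ball (0:A) 1 := by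
    intro x hx
    rw [mem_ball_zero_iff] at hx ⊢
    rw [norm_smul, norm_inv, hcnorm]
    have h1 : ‖T' x‖ ≤ M * ‖x‖ := T'.le_opNorm x
    have h2 : M * ‖x‖ < s := by
      calc M * ‖x‖ ≤ M * 1 := by
            exact mul_le_mul_of_nonneg_left hx.le hMpos
        _ < s := by simp [hs]
    calc s⁻¹ * ‖T' x‖ ≤ s⁻¹ * (M * ‖x‖) := by
          exact mul_le_mul_of_nonneg_left (h1.trans (le_refl _)) (by positivity)
      _ < s⁻¹ * s := by
          exact mul_lt_mul_of_pos_left h2 (by positivity)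
      _ = 1 := inv_mul_cancel₀ (ne_of_gt hspos)
  -- the key algebraic identity
  have hkey : ∀ x y : B, x ∈ ball (0:B) 1 → y ∈ ball (0:B) 1 →
      T' x * T' y - T' (x * y) =
        L ((fun a b => T a * T b - T (a * b)) (c⁻¹ • T' x) (c⁻¹ • T' y)) := by
    intro x y hx hy
    have h1 : T (c⁻¹ • T' x) = c⁻¹ • x := by rw [map_smul, hTT']
    have h2 : T (c⁻¹ • T' y) = c⁻¹ • y := by rw [map_smul, hTT']
    have hmul : (c⁻¹ • T' x) * (c⁻¹ • T' y) = (c⁻¹ * c⁻¹) • (T' x * T' y) := by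
      rw [smul_mul_assoc, mul_smul_comm, smul_smul]
    have hsmul : (c⁻¹ • x) * (c⁻¹ • y) = (c⁻¹ * c⁻¹) • (x * y) := by
      rw [smul_mul_assoc, mul_smul_comm, smul_smul]
    show _ = L (T (c⁻¹ • T' x) * T (c⁻¹ • T' y) - T ((c⁻¹ • T' x) * (c⁻¹ • T' y)))
    rw [h1, h2, hsmul, hmul, map_smul, ← smul_sub]
    show _ = -(c ^ 2 • T') ((c⁻¹ * c⁻¹) • (x * y - T (T' x * T' y)))
    simp only [ContinuousLinearMap.neg_apply, ContinuousLinearMap.smul_apply, map_smul, smul_smul]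
    have hcc : c⁻¹ * c⁻¹ * c ^ 2 = 1 := by
      field_simp
    rw [hcc, one_smul, map_sub, hT'T, neg_sub]
  -- set inclusion
  set SB : Set B := Set.image2 (fun a b => T a * T b - T (a * b)) (ball (0:A) 1) (ball (0:A) 1)
    with hSB
  set K : Set (WeakSpace ℂ B) := closure ((toWeakSpace ℂ B) '' SB) with hK
  have hsub : (toWeakSpace ℂ A) ''
      (Set.image2 (fun a b => T' a * T' b - T' (a * b)) (ball (0:B) 1) (ball (0:B) 1)) ⊆
      (WeakSpace.map L) '' K := by
    rintro - ⟨z, ⟨x, hx, y, hy, rfl⟩, rfl⟩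
    refine ⟨(toWeakSpace ℂ B) ((fun a b => T a * T b - T (a * b)) (c⁻¹ • T' x) (c⁻¹ • T' y)),
      subset_closure ⟨_, ⟨_, hball x hx, _, hball y hy, rfl⟩, rfl⟩, ?_⟩
    have := hkey x y hx hy
    exact congrArg (toWeakSpace ℂ A) this.symm
  -- conclude compactness
  have hKcomp : IsCompact K := hT
  have himg : IsCompact ((WeakSpace.map L) '' K) :=
    hKcomp.image (WeakSpace.map L).continuous
  have hclimg : IsCompact (closure ((WeakSpace.map L) '' K)) := himg.closure
  exact hclimg.of_isClosed_subset isClosed_closure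
    (closure_mono hsub)
end

section
/- Let X and Y be infinite, locally compact, Hausdorff topological spaces and suppose X is perfect, i.e. X is non-empty and has no isolated points. Let T : C₀(X,ℂ) → C₀(Y,ℂ) be a bijective bounded linear map such that for every f ∈ C₀(X,ℂ), both of the linear maps g ↦ S_T(f,g) and g ↦ S_T(g,f) from C₀(X,ℂ) to C₀(Y,ℂ) are weakly compact. Then T is multiplicative, and consequently there is a homeomorphism ψ : Y → X such that T(f) = f ∘ ψ for every f ∈ C₀(X,ℂ). -/
open Metric ZeroAtInfty Filter Topology Set Pointwise

set_option maxHeartbeats 1000000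

noncomputable section PSWIM

namespace PSWIM

variable {X : Type*} [TopologicalSpace X]

/-- evaluation as a continuous linear map -/
def evalCLM (x : X) : C₀(X, ℂ) →L[ℂ] ℂ :=
  LinearMap.mkContinuous
    { toFun := fun f => f x
      map_add' := fun f g => rfl
      map_smul' := fun c f => rfl } 1
    (fun f => by
      rw [one_mul]
      calc ‖f x‖ = ‖f.toBCF x‖ := rfl
        _ ≤ ‖f.toBCF‖ := f.toBCF.norm_coe_le_norm x
        _ = ‖f‖ := ZeroAtInftyContinuousMap.norm_toBCF_eq_norm)

@[simp] lemma evalCLM_apply (x : X) (f : C₀(X, ℂ)) : evalCLM x f = f x := rfl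

lemma norm_apply_le (f : C₀(X, ℂ)) (x : X) : ‖f x‖ ≤ ‖f‖ :=
  le_of_eq_of_le rfl ((f.toBCF.norm_coe_le_norm x).trans_eq
    ZeroAtInftyContinuousMap.norm_toBCF_eq_norm)

lemma norm_le_of_forall {f : C₀(X, ℂ)} {C : ℝ} (hC : 0 ≤ C) (h : ∀ x, ‖f x‖ ≤ C) : ‖f‖ ≤ C := by
  rw [← ZeroAtInftyContinuousMap.norm_toBCF_eq_norm]
  exact BoundedContinuousFunction.norm_le hC |>.mpr h

lemma isCompact_le_norm (h : C₀(X, ℂ)) {ε : ℝ} (hε : 0 < ε) :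
    IsCompact {x | ε ≤ ‖h x‖} := by
  have h1 : Tendsto h (cocompact X) (𝓝 0) := zero_at_infty h
  have h2 : h ⁻¹' ball 0 ε ∈ cocompact X := h1 (ball_mem_nhds 0 hε)
  obtain ⟨K, hK, hKs⟩ := mem_cocompact.mp h2
  refine hK.of_isClosed_subset ?_ ?_
  · exact isClosed_le continuous_const (continuous_norm.comp (map_continuous h))
  · intro x hx
    by_contra hxK
    have : x ∈ h ⁻¹' ball 0 ε := hKs hxK
    simp only [mem_preimage, mem_ball, dist_zero_right] at this
    exact absurd (lt_of_lt_of_le this hx) (lt_irrefl _)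

section bump
variable [LocallyCompactSpace X] [T2Space X]

lemma exists_bump {x : X} {V : Set X} (hV : IsOpen V) (hx : x ∈ V) :
    ∃ f : C₀(X, ℂ), f x = 1 ∧ (∀ y, y ∉ V → f y = 0) ∧ ∀ y, ‖f y‖ ≤ 1 := by
  obtain ⟨f, hf1, hf0, hfc, hf01⟩ :=
    exists_continuous_one_zero_of_isCompact (isCompact_singleton (x := x))
      hV.isClosed_compl (by simpa [Set.disjoint_compl_right_iff_subset] using hx)
  refine ⟨⟨⟨fun y => (f y : ℂ), Complex.continuous_ofReal.comp f.continuous⟩, ?_⟩, ?_, ?_, ?_⟩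
  · have := hfc.is_zero_at_infty
    have h2 : Tendsto (fun y => ((f y : ℂ))) (cocompact X) (𝓝 ((0:ℝ) : ℂ)) :=
      (Complex.continuous_ofReal.tendsto 0).comp this
    simpa using h2
  · simpa using hf1 (mem_singleton x)
  · intro y hy
    simpa using hf0 hy
  · intro y
    have := hf01 y
    simp only [ZeroAtInftyContinuousMap.coe_mk, ContinuousMap.coe_mk, Complex.norm_real]
    rw [Real.norm_eq_abs, abs_le]
    constructor <;> linarith [this.1, this.2]

lemma exists_separating {x x' : X} (h : x ≠ x') :
    ∃ f : C₀(X, ℂ), f x = 1 ∧ f x' = 0 := by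
  obtain ⟨f, h1, h0, _⟩ := exists_bump (V := {x'}ᶜ) (isClosed_singleton.isOpen_compl) h
  exact ⟨f, h1, h0 x' (by simp)⟩

end bump

section incpt

variable {E F G : Type*} [NormedAddCommGroup E] [NormedSpace ℂ E]
  [NormedAddCommGroup F] [NormedSpace ℂ F] [NormedAddCommGroup G] [NormedSpace ℂ G]

instance wkSMul : ContinuousSMul ℂ (WeakSpace ℂ F) :=
  WeakBilin.instContinuousSMul _

/-- the image of the unit ball is contained in a weakly compact set -/
def InCpt (L : E →L[ℂ] F) : Prop :=
  ∃ K : Set (WeakSpace ℂ F), IsCompact K ∧ ∀ g : E, ‖g‖ < 1 → toWeakSpace ℂ F (L g) ∈ K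

lemma InCpt.post {L : E →L[ℂ] F} (h : InCpt L) (M : F →L[ℂ] G) : InCpt (M ∘L L) := by
  obtain ⟨K, hK, hKm⟩ := h
  refine ⟨WeakSpace.map M '' K, hK.image (WeakSpace.map M).continuous, fun g hg => ?_⟩
  exact ⟨_, hKm g hg, rfl⟩

lemma InCpt.smul {L : E →L[ℂ] F} (h : InCpt L) (c : ℂ) : InCpt (c • L) := by
  obtain ⟨K, hK, hKm⟩ := h
  refine ⟨c • K, hK.smul c, fun g hg => ?_⟩
  have : toWeakSpace ℂ F ((c • L) g) = c • toWeakSpace ℂ F (L g) := by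
    simp [map_smul]
  rw [this]
  exact Set.smul_mem_smul_set (hKm g hg)

lemma InCpt.add {L₁ L₂ : E →L[ℂ] F} (h₁ : InCpt L₁) (h₂ : InCpt L₂) : InCpt (L₁ + L₂) := by
  obtain ⟨K₁, hK₁, hm₁⟩ := h₁
  obtain ⟨K₂, hK₂, hm₂⟩ := h₂
  refine ⟨K₁ + K₂, hK₁.add hK₂, fun g hg => ?_⟩
  have : toWeakSpace ℂ F ((L₁ + L₂) g) = toWeakSpace ℂ F (L₁ g) + toWeakSpace ℂ F (L₂ g) := by
    simp [map_add]
  rw [this]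
  exact Set.add_mem_add (hm₁ g hg) (hm₂ g hg)

lemma InCpt.sub {L₁ L₂ : E →L[ℂ] F} (h₁ : InCpt L₁) (h₂ : InCpt L₂) : InCpt (L₁ - L₂) := by
  have := h₁.add (h₂.smul (-1))
  simpa [sub_eq_add_neg, neg_one_smul] using this

lemma InCpt.pre {L : E →L[ℂ] F} (h : InCpt L) (M : G →L[ℂ] E) : InCpt (L ∘L M) := by
  obtain ⟨K, hK, hKm⟩ := h
  set c : ℂ := ((‖M‖ + 1 : ℝ) : ℂ) with hc
  have hcpos : (0:ℝ) < ‖M‖ + 1 := by positivity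
  have hcne : c ≠ 0 := by
    simp only [hc, ne_eq, Complex.ofReal_eq_zero]
    exact ne_of_gt hcpos
  refine ⟨c • K, hK.smul c, fun g hg => ?_⟩
  set g' : E := c⁻¹ • M g with hg'
  have hng' : ‖g'‖ < 1 := by
    rw [hg', norm_smul]
    have h1 : ‖M g‖ ≤ ‖M‖ := by
      calc ‖M g‖ ≤ ‖M‖ * ‖g‖ := M.le_opNorm g
        _ ≤ ‖M‖ * 1 := by nlinarith [norm_nonneg (M : G →L[ℂ] E), hg, norm_nonneg g]
        _ = ‖M‖ := mul_one _
    have h2 : ‖c⁻¹‖ = (‖M‖ + 1)⁻¹ := by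
      rw [norm_inv, hc, Complex.norm_real, Real.norm_of_nonneg hcpos.le]
    rw [h2, inv_mul_lt_iff₀ hcpos]
    nlinarith
  have : (L ∘L M) g = c • L g' := by
    rw [hg', map_smul, smul_smul, mul_inv_cancel₀ hcne, one_smul]
    rfl
  rw [this]
  have : toWeakSpace ℂ F (c • L g') = c • toWeakSpace ℂ F (L g') := by simp [map_smul]
  rw [this]
  exact Set.smul_mem_smul_set (hKm g' hng')

end incpt

section core
variable [LocallyCompactSpace X] [T2Space X]

/-- a triple: a marked point with open set, plus a reserve open set, inside U -/
structure Tri (U : Set X) where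
  pt : X
  V : Set X
  W : Set X
  hV : IsOpen V
  hW : IsOpen W
  hpt : pt ∈ V
  hWne : W.Nonempty
  hVU : V ⊆ U
  hWU : W ⊆ U
  hd : Disjoint V W

lemma mkTri (hX : ∀ x : X, (𝓝[≠] x).NeBot) {U : Set X} {W : Set X} (hW : IsOpen W)
    (hne : W.Nonempty) (hWU : W ⊆ U) : ∃ t : Tri U, t.V ⊆ W ∧ t.W ⊆ W := by
  obtain ⟨x, hx⟩ := hne
  have hmem : W ∈ 𝓝[≠] x :=
    mem_nhdsWithin_of_mem_nhds (hW.mem_nhds hx)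
  have : (W ∩ {x}ᶜ).Nonempty := by
    have := hX x
    exact Filter.nonempty_of_mem (Filter.inter_mem hmem self_mem_nhdsWithin)
  obtain ⟨x', hx'W, hx'⟩ := this
  have hxx : x' ≠ x := by simpa using hx'
  obtain ⟨A, B, hA, hB, hx'A, hxB, hAB⟩ := t2_separation hxx
  refine ⟨⟨x, B ∩ W, A ∩ W, hB.inter hW, hA.inter hW, ⟨hxB, hx⟩, ⟨x', hx'A, hx'W⟩,
    (Set.inter_subset_right).trans hWU, (Set.inter_subset_right).trans hWU, ?_⟩,
    Set.inter_subset_right, Set.inter_subset_right⟩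
  exact Disjoint.mono Set.inter_subset_left Set.inter_subset_left hAB.symm

lemma exists_disjoint_points (hX : ∀ x : X, (𝓝[≠] x).NeBot) {U : Set X} (hU : IsOpen U)
    (hne : U.Nonempty) :
    ∃ (p : ℕ → X) (V : ℕ → Set X), (∀ n, IsOpen (V n)) ∧ (∀ n, p n ∈ V n) ∧
      (∀ n, V n ⊆ U) ∧ Pairwise (Function.onFun Disjoint V) := by
  classical
  have h0 := mkTri hX hU hne (subset_refl U)
  set t0 : Tri U := h0.choose with ht0
  have step : ∀ t : Tri U, ∃ t' : Tri U, t'.V ⊆ t.W ∧ t'.W ⊆ t.W :=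
    fun t => mkTri hX t.hW t.hWne t.hWU
  set F : Tri U → Tri U := fun t => (step t).choose with hF
  have hFv : ∀ t : Tri U, (F t).V ⊆ t.W ∧ (F t).W ⊆ t.W := fun t => (step t).choose_spec
  set seq : ℕ → Tri U := fun n => F^[n] t0 with hseq
  have hsucc : ∀ n, seq (n + 1) = F (seq n) := by
    intro n
    simp only [hseq, Function.iterate_succ_apply']
  -- W decreasing
  have hWmono : ∀ m n, m ≤ n → (seq n).W ⊆ (seq m).W := by
    intro m n hmn
    induction n with
    | zero => simp_all
    | succ k ih =>
      rcases Nat.lt_or_ge m (k+1) with hlt | hge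
      · have : (seq (k+1)).W ⊆ (seq k).W := by rw [hsucc]; exact (hFv (seq k)).2
        exact this.trans (ih (Nat.lt_succ_iff.mp hlt))
      · have : m = k + 1 := le_antisymm hmn hge
        rw [this]
  have hVW : ∀ m n, m < n → (seq n).V ⊆ (seq m).W := by
    intro m n hmn
    obtain ⟨k, rfl⟩ : ∃ k, n = k + 1 := ⟨n - 1, by omega⟩
    have h1 : (seq (k+1)).V ⊆ (seq k).W := by rw [hsucc]; exact (hFv (seq k)).1
    exact h1.trans (hWmono m k (by omega))
  refine ⟨fun n => (seq n).pt, fun n => (seq n).V, fun n => (seq n).hV,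
    fun n => (seq n).hpt, fun n => (seq n).hVU, ?_⟩
  have key : ∀ m n, m < n → Disjoint (seq m).V (seq n).V := by
    intro m n hmn
    exact Disjoint.mono_right (hVW m n hmn) (seq m).hd
  intro m n hmn
  rcases lt_or_gt_of_ne hmn with h | h
  · exact key m n h
  · exact (key n m h).symm

lemma eq_of_mapClusterPt {c a : ℂ} {v : ℕ → ℂ} (h : MapClusterPt c atTop v)
    (hv : ∀ᶠ N in atTop, v N = a) : c = a := by
  have ht : Tendsto v atTop (𝓝 a) :=
    Tendsto.congr' (by filter_upwards [hv] with n hn using hn.symm) tendsto_const_nhds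
  have hnb : (𝓝 c ⊓ map v atTop).NeBot := h
  have h1 : (𝓝 c ⊓ 𝓝 a).NeBot :=
    Filter.neBot_of_le (f := 𝓝 c ⊓ map v atTop) (inf_le_inf_left _ ht)
  exact t2_iff_nhds.mp inferInstance h1

lemma eval_weak_continuous (x : X) :
    Continuous fun w : WeakSpace ℂ C₀(X, ℂ) => ((toWeakSpace ℂ C₀(X, ℂ)).symm w) x :=
  WeakBilin.eval_continuous _ (evalCLM x)

/-- Core lemma: on a perfect space, if multiplication by `h` maps the unit ball into a weakly
compact set, then `h = 0`. -/
lemma eq_zero_of_weak_cpt (hX : ∀ x : X, (𝓝[≠] x).NeBot) (h : C₀(X, ℂ))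
    (hc : ∃ K : Set (WeakSpace ℂ C₀(X, ℂ)), IsCompact K ∧
      ∀ g : C₀(X, ℂ), ‖g‖ < 1 → toWeakSpace ℂ C₀(X, ℂ) (h * g) ∈ K) : h = 0 := by
  classical
  by_contra h0
  obtain ⟨x₀, hx₀⟩ : ∃ x₀, h x₀ ≠ 0 := by
    by_contra hall
    push_neg at hall
    exact h0 (DFunLike.ext _ _ fun x => by simpa using hall x)
  set δ : ℝ := ‖h x₀‖ with hδ
  have hδpos : 0 < δ := norm_pos_iff.mpr hx₀
  set U : Set X := {x | δ / 2 < ‖h x‖} with hU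
  have hUopen : IsOpen U := isOpen_lt continuous_const (continuous_norm.comp (map_continuous h))
  have hUne : U.Nonempty := ⟨x₀, by simp only [hU, Set.mem_setOf_eq]; linarith⟩
  obtain ⟨p, V, hVopen, hpV, hVU, hVdisj⟩ := exists_disjoint_points hX hUopen hUne
  -- bumps
  have hbump : ∀ n, ∃ f : C₀(X, ℂ), f (p n) = 1 ∧ (∀ y, y ∉ V n → f y = 0) ∧ ∀ y, ‖f y‖ ≤ 1 :=
    fun n => exists_bump (hVopen n) (hpV n)
  set f : ℕ → C₀(X, ℂ) := fun n => (hbump n).choose with hf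
  have hf1 : ∀ n, f n (p n) = 1 := fun n => (hbump n).choose_spec.1
  have hf0 : ∀ n y, y ∉ V n → f n y = 0 := fun n => (hbump n).choose_spec.2.1
  have hfle : ∀ n y, ‖f n y‖ ≤ 1 := fun n => (hbump n).choose_spec.2.2
  set g : ℕ → C₀(X, ℂ) := fun N => (2⁻¹ : ℂ) • ∑ k ∈ Finset.range N, f k with hg
  have hgapply : ∀ N x, g N x = (2⁻¹ : ℂ) * ∑ k ∈ Finset.range N, f k x := by
    intro N x
    have : g N x = evalCLM x (g N) := rfl
    rw [this, hg]
    simp only [map_smul, map_sum, smul_eq_mul]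
    rfl
  -- pointwise value of the sum
  have hval : ∀ N x, ∃ c : ℂ, (∑ k ∈ Finset.range N, f k x) = c ∧ ‖c‖ ≤ 1 := by
    intro N x
    by_cases hx : ∃ j, x ∈ V j
    · obtain ⟨j, hj⟩ := hx
      have huniq : ∀ b ∈ Finset.range N, b ≠ j → f b x = 0 := by
        intro b _ hbj
        exact hf0 b x (fun hb => (hVdisj hbj).ne_of_mem hb hj rfl)
      by_cases hjN : j ∈ Finset.range N
      · exact ⟨f j x, Finset.sum_eq_single_of_mem j hjN huniq, hfle j x⟩
      · refine ⟨0, Finset.sum_eq_zero fun b hb => ?_, by simp⟩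
        exact huniq b hb (fun hbj => hjN (hbj ▸ hb))
    · push_neg at hx
      refine ⟨0, Finset.sum_eq_zero fun b _ => hf0 b x (hx b), by simp⟩
  have hgnorm : ∀ N, ‖g N‖ < 1 := by
    intro N
    have : ‖g N‖ ≤ 2⁻¹ := by
      refine norm_le_of_forall (by norm_num) fun x => ?_
      obtain ⟨c, hcv, hcle⟩ := hval N x
      rw [hgapply N x, hcv, norm_mul]
      have : ‖(2⁻¹ : ℂ)‖ = 2⁻¹ := by norm_num
      rw [this]
      nlinarith
    linarith
  obtain ⟨K, hK, hKm⟩ := hc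
  set u : ℕ → WeakSpace ℂ C₀(X, ℂ) := fun N => toWeakSpace ℂ C₀(X, ℂ) (h * g N) with hu
  have humem : ∀ N, u N ∈ K := fun N => hKm (g N) (hgnorm N)
  have hle : map u atTop ≤ 𝓟 K :=
    le_principal_iff.mpr (Filter.mem_map.mpr (Filter.Eventually.of_forall humem))
  obtain ⟨q, hqK, hq⟩ := hK hle
  set G : C₀(X, ℂ) := (toWeakSpace ℂ C₀(X, ℂ)).symm q with hG
  -- pointwise cluster values
  have hclG : ∀ x : X, MapClusterPt (G x) atTop (fun N => (h * g N) x) := by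
    intro x
    have hcont := eval_weak_continuous (X := X) x
    have := MapClusterPt.continuousAt_comp (hcont.continuousAt) hq
    convert this using 2
    rfl
  -- value at p j
  have hGpj : ∀ j, G (p j) = 2⁻¹ * h (p j) := by
    intro j
    refine eq_of_mapClusterPt (hclG (p j)) ?_
    filter_upwards [eventually_ge_atTop (j + 1)] with N hN
    have hsum : (∑ k ∈ Finset.range N, f k (p j)) = 1 := by
      have huniq : ∀ b ∈ Finset.range N, b ≠ j → f b (p j) = 0 := by
        intro b _ hbj
        exact hf0 b (p j) (fun hb => (hVdisj hbj).ne_of_mem hb (hpV j) rfl)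
      rw [Finset.sum_eq_single_of_mem j (Finset.mem_range.mpr (by omega)) huniq, hf1 j]
    have : (h * g N) (p j) = h (p j) * g N (p j) := by
      rw [ZeroAtInftyContinuousMap.coe_mul]; rfl
    rw [this, hgapply, hsum]
    ring
  -- cluster point of the p-sequence
  set C : Set X := {x | δ / 2 ≤ ‖h x‖} with hC
  have hCcpt : IsCompact C := isCompact_le_norm h (by linarith)
  have hpmem : ∀ n, p n ∈ C := fun n => by
    have : δ / 2 < ‖h (p n)‖ := hVU n (hpV n)
    exact le_of_lt this
  have hple : map p atTop ≤ 𝓟 C :=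
    le_principal_iff.mpr (Filter.mem_map.mpr (Filter.Eventually.of_forall hpmem))
  obtain ⟨xs, hxsC, hxs⟩ := hCcpt hple
  -- xs is in no V k
  have hxsV : ∀ k, xs ∉ V k := by
    intro k hk
    have hfr : ∃ᶠ n in atTop, p n ∈ V k :=
      (mapClusterPt_iff_frequently.mp hxs) (V k) ((hVopen k).mem_nhds hk)
    obtain ⟨n, hn1, hn2⟩ := (hfr.and_eventually (eventually_ge_atTop (k + 1))).exists
    exact (hVdisj (show n ≠ k by omega)).ne_of_mem (hpV n) hn1 rfl
  -- G xs = 0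
  have hGxs : G xs = 0 := by
    refine eq_of_mapClusterPt (hclG xs) (Filter.Eventually.of_forall fun N => ?_)
    have : (h * g N) xs = h xs * g N xs := by
      rw [ZeroAtInftyContinuousMap.coe_mul]; rfl
    rw [this, hgapply]
    have : (∑ k ∈ Finset.range N, f k xs) = 0 :=
      Finset.sum_eq_zero fun b _ => hf0 b xs (hxsV b)
    rw [this]
    ring
  -- contradiction via continuity of G
  have hGp : MapClusterPt (G xs) atTop (fun n => G (p n)) := by
    have := MapClusterPt.continuousAt_comp (map_continuous G).continuousAt hxs
    convert this using 2
    rfl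
  rw [hGxs] at hGp
  have hball : ball (0 : ℂ) (δ / 4) ∈ 𝓝 (0 : ℂ) := ball_mem_nhds 0 (by linarith)
  obtain ⟨n, hn⟩ := ((mapClusterPt_iff_frequently.mp hGp) _ hball).exists
  rw [hGpj n] at hn
  have h1 : ‖(2⁻¹ : ℂ) * h (p n)‖ = 2⁻¹ * ‖h (p n)‖ := by
    rw [norm_mul]; norm_num
  have h2 : δ / 2 < ‖h (p n)‖ := hVU n (hpV n)
  rw [mem_ball, dist_zero_right, h1] at hn
  linarith

end core

section char
variable [LocallyCompactSpace X] [T2Space X]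

lemma exists_eval (χ : C₀(X, ℂ) →L[ℂ] ℂ) (hm : ∀ f g, χ (f * g) = χ f * χ g)
    (hne : ∃ f, χ f ≠ 0) : ∃ x : X, ∀ f, χ f = f x := by
  classical
  obtain ⟨f₁, hf₁⟩ := hne
  set f₀ : C₀(X, ℂ) := (χ f₁)⁻¹ • f₁ with hf₀def
  have hχf₀ : χ f₀ = 1 := by
    rw [hf₀def, map_smul, smul_eq_mul, inv_mul_cancel₀ hf₁]
  by_contra hcon
  push_neg at hcon
  -- at every point there is a kernel element not vanishing there
  have hker : ∀ x : X, ∃ f : C₀(X, ℂ), χ f = 0 ∧ f x ≠ 0 := by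
    intro x
    by_contra hk
    push_neg at hk
    have hev : ∀ f : C₀(X, ℂ), f x = χ f * f₀ x := by
      intro f
      have h1 : χ (f - χ f • f₀) = 0 := by
        rw [map_sub, map_smul, smul_eq_mul, hχf₀, mul_one, sub_self]
      have h2 := hk _ h1
      have h3 : (f - χ f • f₀) x = f x - χ f * f₀ x := by
        have : (f - χ f • f₀) x = evalCLM x (f - χ f • f₀) := rfl
        rw [this, map_sub, map_smul]
        rfl
      rw [h3] at h2
      linear_combination h2
    have ha : f₀ x ≠ 0 := by
      intro ha0
      obtain ⟨b, hb1, _, _⟩ := exists_bump (V := (Set.univ : Set X)) isOpen_univ (Set.mem_univ x)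
      have := hev b
      rw [ha0, mul_zero] at this
      rw [hb1] at this
      exact one_ne_zero this
    have ha2 : f₀ x * f₀ x = f₀ x := by
      have h1 := hev (f₀ * f₀)
      have h2 : (f₀ * f₀) x = f₀ x * f₀ x := by
        rw [ZeroAtInftyContinuousMap.coe_mul]; rfl
      rw [h2, hm, hχf₀] at h1
      simpa using h1
    have ha1 : f₀ x = 1 := by
      have hz : f₀ x * (f₀ x - 1) = 0 := by linear_combination ha2
      rcases mul_eq_zero.mp hz with h | h
      · exact absurd h ha
      · linear_combination h
    obtain ⟨f, hf⟩ := hcon x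
    exact hf (by rw [hev f, ha1, mul_one])
  -- operator norm is positive
  have hCpos : 0 < ‖χ‖ := by
    have h1 : (1 : ℝ) ≤ ‖χ‖ * ‖f₀‖ := by
      calc (1:ℝ) = ‖χ f₀‖ := by rw [hχf₀]; simp
        _ ≤ ‖χ‖ * ‖f₀‖ := χ.le_opNorm f₀
    nlinarith [norm_nonneg f₀, norm_nonneg χ]
  set Cn : ℝ := ‖χ‖ with hCn
  set ε : ℝ := 1 / (2 * Cn) with hε
  have hεpos : 0 < ε := by rw [hε]; positivity
  set Kε : Set X := {x | ε ≤ ‖f₀ x‖} with hKε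
  have hKεcpt : IsCompact Kε := isCompact_le_norm f₀ hεpos
  -- choose kernel functions
  set κ : X → C₀(X, ℂ) := fun x => (hker x).choose with hκ
  have hκ0 : ∀ x, χ (κ x) = 0 := fun x => (hker x).choose_spec.1
  have hκne : ∀ x, κ x x ≠ 0 := fun x => (hker x).choose_spec.2
  -- finite subcover
  have hcov : Kε ⊆ ⋃ x ∈ Kε, {y | κ x y ≠ 0} := by
    intro y hy
    exact Set.mem_biUnion hy (hκne y)
  obtain ⟨s, hssub, hsfin, hscov⟩ :=
    hKεcpt.elim_finite_subcover_image
      (fun x _ => (isOpen_ne_fun (map_continuous (κ x)) continuous_const : IsOpen {y | κ x y ≠ 0}))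
      hcov
  set sf : Finset X := hsfin.toFinset with hsf
  set u : C₀(X, ℂ) := ∑ x ∈ sf, κ x * star (κ x) with hu
  have hχu : χ u = 0 := by
    rw [hu, map_sum]
    refine Finset.sum_eq_zero fun x _ => ?_
    rw [hm, hκ0, zero_mul]
  set ρ : X → ℝ := fun y => ∑ x ∈ sf, Complex.normSq (κ x y) with hρ
  have hρcont : Continuous ρ :=
    continuous_finset_sum _ fun x _ => Complex.continuous_normSq.comp (map_continuous (κ x))
  have hρnonneg : ∀ y, 0 ≤ ρ y :=
    fun y => Finset.sum_nonneg fun x _ => Complex.normSq_nonneg _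
  have huval : ∀ y, u y = ((ρ y : ℝ) : ℂ) := by
    intro y
    have h1 : u y = evalCLM y u := rfl
    rw [h1, hu, map_sum]
    rw [hρ]
    push_cast
    refine Finset.sum_congr rfl fun x _ => ?_
    have : evalCLM y (κ x * star (κ x)) = κ x y * star (κ x y) := by
      show (κ x * star (κ x)) y = _
      rw [ZeroAtInftyContinuousMap.coe_mul, ZeroAtInftyContinuousMap.coe_star]
      rfl
    rw [this]
    rw [Complex.star_def, Complex.mul_conj]
  -- positivity on Kε
  have hδ0 : ∃ δ0 : ℝ, 0 < δ0 ∧ ∀ y ∈ Kε, δ0 ≤ ρ y := by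
    rcases Set.eq_empty_or_nonempty Kε with hemp | hKne
    · exact ⟨1, one_pos, fun y hy => absurd (hemp ▸ hy) (Set.notMem_empty y)⟩
    · obtain ⟨z, hzK, hz⟩ := hKεcpt.exists_isMinOn hKne hρcont.continuousOn
      refine ⟨ρ z, ?_, fun y hy => hz hy⟩
      obtain ⟨x, hxs, hxz⟩ := Set.mem_iUnion₂.mp (hscov hzK)
      have hxzne : κ x z ≠ 0 := hxz
      have hterm : 0 < Complex.normSq (κ x z) := Complex.normSq_pos.mpr hxzne
      have : x ∈ sf := hsf ▸ hsfin.mem_toFinset.mpr hxs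
      exact Finset.sum_pos' (fun i _ => Complex.normSq_nonneg _) ⟨x, this, hterm⟩
  obtain ⟨δ0, hδ0pos, hδ0le⟩ := hδ0
  set ε' : ℝ := δ0 / (2 * Cn * (‖f₀‖ + 1)) with hε'
  have hε'pos : 0 < ε' := by
    rw [hε']
    have : 0 < ‖f₀‖ + 1 := by positivity
    positivity
  have hdenpos : ∀ y, 0 < ρ y + ε' := fun y => by nlinarith [hρnonneg y]
  have hdenne : ∀ y, ((ρ y + ε' : ℝ) : ℂ) ≠ 0 := fun y => by
    simp only [ne_eq, Complex.ofReal_eq_zero]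
    exact ne_of_gt (hdenpos y)
  -- the auxiliary function
  set sfun : C₀(X, ℂ) := ⟨⟨fun y => f₀ y * (((ρ y + ε' : ℝ) : ℂ))⁻¹,
      (map_continuous f₀).mul (Continuous.inv₀
        (Complex.continuous_ofReal.comp (hρcont.add continuous_const)) hdenne)⟩, by
    refine squeeze_zero_norm (f := fun y => f₀ y * (((ρ y + ε' : ℝ) : ℂ))⁻¹)
      (a := fun y => ‖f₀ y‖ * ε'⁻¹) (fun y => ?_) ?_
    · rw [norm_mul, norm_inv, Complex.norm_real, Real.norm_of_nonneg (hdenpos y).le]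
      have h1 : ε'⁻¹ ≤ ε'⁻¹ := le_refl _
      have h2 : (ρ y + ε')⁻¹ ≤ ε'⁻¹ := by
        apply inv_anti₀ hε'pos
        nlinarith [hρnonneg y]
      have := norm_nonneg (f₀ y)
      nlinarith
    · have h1 : Tendsto (fun y => ‖f₀ y‖) (cocompact X) (𝓝 0) := by
        simpa using (zero_at_infty f₀).norm
      simpa using h1.mul_const ε'⁻¹⟩ with hsfun
  set r : C₀(X, ℂ) := f₀ - u * sfun with hr
  have hχr : χ r = 1 := by
    rw [hr, map_sub, hm, hχu, hχf₀, zero_mul, sub_zero]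
  -- pointwise formula for r
  have hrval : ∀ y, r y = f₀ y * ((ε' : ℂ) * (((ρ y + ε' : ℝ) : ℂ))⁻¹) := by
    intro y
    have h1 : r y = f₀ y - u y * sfun y := by
      have : r y = evalCLM y r := rfl
      rw [this, hr, map_sub]
      rfl
    have h2 : sfun y = f₀ y * (((ρ y + ε' : ℝ) : ℂ))⁻¹ := rfl
    rw [h1, h2, huval y]
    set d : ℂ := ((ρ y + ε' : ℝ) : ℂ) with hd
    have hdd : d * d⁻¹ = 1 := mul_inv_cancel₀ (hdenne y)
    have h3 : d = ((ρ y : ℝ) : ℂ) + ((ε' : ℝ) : ℂ) := by rw [hd]; push_cast; ring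
    linear_combination (-(f₀ y)) * hdd + (f₀ y * d⁻¹) * h3
  have hrnorm : ∀ y, ‖r y‖ ≤ 1 / (2 * Cn) := by
    intro y
    have e1 : ‖((ε' : ℝ) : ℂ)‖ = ε' := by
      rw [Complex.norm_real, Real.norm_of_nonneg hε'pos.le]
    have e2 : ‖((ρ y + ε' : ℝ) : ℂ)‖ = ρ y + ε' := by
      rw [Complex.norm_real, Real.norm_of_nonneg (hdenpos y).le]
    rw [hrval y, norm_mul, norm_mul, norm_inv, e1, e2]
    by_cases hy : y ∈ Kε
    · have h1 : δ0 ≤ ρ y := hδ0le y hy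
      have h2 : ‖f₀ y‖ ≤ ‖f₀‖ := norm_apply_le f₀ y
      have h3 : (ρ y + ε')⁻¹ ≤ δ0⁻¹ := by
        apply inv_anti₀ hδ0pos
        nlinarith
      have h4a : ε' * (ρ y + ε')⁻¹ ≤ ε' * δ0⁻¹ := mul_le_mul_of_nonneg_left h3 hε'pos.le
      have h4 : ‖f₀ y‖ * (ε' * (ρ y + ε')⁻¹) ≤ ‖f₀‖ * (ε' * δ0⁻¹) :=
        mul_le_mul h2 h4a (le_of_lt (mul_pos hε'pos (inv_pos.mpr (hdenpos y))))
          (norm_nonneg f₀)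
      have hkey : ‖f₀‖ * (ε' * δ0⁻¹) = ‖f₀‖ / ((‖f₀‖ + 1) * (2 * Cn)) := by
        rw [hε']
        have hδ0ne : δ0 ≠ 0 := ne_of_gt hδ0pos
        have h7 : (‖f₀‖ + 1) ≠ 0 := by positivity
        have h8 : (2 * Cn) ≠ 0 := by positivity
        field_simp
      have h5 : ‖f₀‖ * (ε' * δ0⁻¹) ≤ 1 / (2 * Cn) := by
        rw [hkey, div_le_div_iff₀ (by positivity) (by positivity)]
        nlinarith [norm_nonneg f₀, hCpos]
      linarith
    · have h1 : ‖f₀ y‖ < ε := lt_of_not_ge hy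
      have h2 : ε' * (ρ y + ε')⁻¹ ≤ 1 := by
        rw [← div_eq_mul_inv, div_le_one (hdenpos y)]
        nlinarith [hρnonneg y]
      have h3 : ‖f₀ y‖ * (ε' * (ρ y + ε')⁻¹) ≤ ‖f₀ y‖ := by
        have := norm_nonneg (f₀ y)
        nlinarith [mul_pos hε'pos (inv_pos.mpr (hdenpos y))]
      rw [hε] at h1
      linarith
  have hfinal : (1 : ℝ) ≤ Cn * (1 / (2 * Cn)) := by
    calc (1:ℝ) = ‖χ r‖ := by rw [hχr]; simp
      _ ≤ ‖χ‖ * ‖r‖ := χ.le_opNorm r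
      _ ≤ Cn * (1 / (2 * Cn)) := by
          apply mul_le_mul_of_nonneg_left _ (norm_nonneg χ)
          exact norm_le_of_forall (by positivity) hrnorm
  have : Cn * (1 / (2 * Cn)) = 1 / 2 := by
    field_simp
  rw [this] at hfinal
  linarith

end char

end PSWIM

open PSWIM

/-- if `X` and `Y` are infinite locally compact Hausdorff spaces, `X` is perfect
(no isolated points), and `T : C₀(X,ℂ) → C₀(Y,ℂ)` is a bijective bounded linear map such that
for every `f` the linear maps `g ↦ S_T(f,g)` and `g ↦ S_T(g,f)` are weakly compact (where
`S_T(f,g) = T f * T g - T (f*g)`), then `T` is multiplicative, and hence is induced by a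
homeomorphism `ψ : Y ≃ₜ X` via `T f = f ∘ ψ`. -/
theorem perfect_semiWcf_isomorphism_is_multiplicative
    {X Y : Type*} [TopologicalSpace X] [LocallyCompactSpace X] [T2Space X] [Infinite X]
    [TopologicalSpace Y] [LocallyCompactSpace Y] [T2Space Y] [Infinite Y]
    (hX : ∀ x : X, (𝓝[≠] x).NeBot)
    (T : C₀(X, ℂ) →L[ℂ] C₀(Y, ℂ)) (hbij : Function.Bijective T)
    (hwc : ∀ f : C₀(X, ℂ),
      IsCompact (closure ((toWeakSpace ℂ C₀(Y, ℂ)) ''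
        ((fun g => T f * T g - T (f * g)) '' ball (0 : C₀(X, ℂ)) 1))) ∧
      IsCompact (closure ((toWeakSpace ℂ C₀(Y, ℂ)) ''
        ((fun g => T g * T f - T (g * f)) '' ball (0 : C₀(X, ℂ)) 1)))) :
    (∀ f g : C₀(X, ℂ), T (f * g) = T f * T g) ∧
    ∃ ψ : Y ≃ₜ X, ∀ (f : C₀(X, ℂ)) (y : Y), T f y = f (ψ y) := by
  classical
  -- the continuous linear equivalence given by the open mapping theorem
  set E : C₀(X, ℂ) ≃L[ℂ] C₀(Y, ℂ) :=
    ContinuousLinearEquiv.ofBijective T (LinearMap.ker_eq_bot.mpr hbij.1)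
      (LinearMap.range_eq_top.mpr hbij.2) with hE
  have hET : ∀ f, E f = T f := fun f => rfl
  have hQT : ∀ f : C₀(X, ℂ), E.symm (T f) = f := fun f => by
    rw [← hET]; exact E.symm_apply_apply f
  have hTQ : ∀ u : C₀(Y, ℂ), T (E.symm u) = u := fun u => by
    rw [← hET]; exact E.apply_symm_apply u
  -- the multiplicativity defect as a continuous linear map
  set SL : C₀(X, ℂ) → (C₀(X, ℂ) →L[ℂ] C₀(Y, ℂ)) := fun f =>
    ((ContinuousLinearMap.mul ℂ C₀(Y, ℂ) (T f)).comp T) -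
      T.comp (ContinuousLinearMap.mul ℂ C₀(X, ℂ) f) with hSL
  have hSLapply : ∀ f g, SL f g = T f * T g - T (f * g) := fun f g => rfl
  have hSLcpt : ∀ f, InCpt (SL f) := by
    intro f
    refine ⟨_, (hwc f).1, fun g hg => ?_⟩
    refine subset_closure ?_
    refine Set.mem_image_of_mem _ ?_
    refine ⟨g, mem_ball_zero_iff.mpr hg, ?_⟩
    rw [hSLapply]
  -- transported defect on the X side
  set W : C₀(X, ℂ) → (C₀(X, ℂ) →L[ℂ] C₀(X, ℂ)) := fun f =>
    (E.symm : C₀(Y, ℂ) →L[ℂ] C₀(X, ℂ)).comp (SL f) with hW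
  have hWcpt : ∀ f, InCpt (W f) := fun f => (hSLcpt f).post _
  have hWapply : ∀ f g, W f g = E.symm (T f * T g) - f * g := by
    intro f g
    show E.symm (SL f g) = _
    rw [hSLapply, map_sub, hQT]
  -- the transported product
  set P : C₀(X, ℂ) → C₀(X, ℂ) → C₀(X, ℂ) := fun f g => E.symm (T f * T g) with hP
  -- the key algebraic identity
  have key : ∀ f g k : C₀(X, ℂ),
      (W f g) * k = (W f) (g * k) + E.symm (T f * T ((W g) k)) - (W (P f g)) k := by
    intro f g k
    rw [hWapply, hWapply, hWapply, hWapply, hP]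
    rw [hTQ]
    simp only [map_sub, mul_sub, sub_mul, mul_assoc]
    rw [hTQ]
    abel
  -- multiplication by `W f g` is weakly compact
  have hMcpt : ∀ f g, InCpt (ContinuousLinearMap.mul ℂ C₀(X, ℂ) (W f g)) := by
    intro f g
    have hA : InCpt ((W f).comp (ContinuousLinearMap.mul ℂ C₀(X, ℂ) g)) :=
      (hWcpt f).pre _
    have hB : InCpt (((E.symm : C₀(Y, ℂ) →L[ℂ] C₀(X, ℂ)).comp
        ((ContinuousLinearMap.mul ℂ C₀(Y, ℂ) (T f)).comp T)).comp (W g)) :=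
      ((hWcpt g).post _)
    have hC : InCpt (W (P f g)) := hWcpt _
    have hsum := (hA.add hB).sub hC
    have heq : ContinuousLinearMap.mul ℂ C₀(X, ℂ) (W f g) =
        (W f).comp (ContinuousLinearMap.mul ℂ C₀(X, ℂ) g) +
        ((E.symm : C₀(Y, ℂ) →L[ℂ] C₀(X, ℂ)).comp
          ((ContinuousLinearMap.mul ℂ C₀(Y, ℂ) (T f)).comp T)).comp (W g) -
        W (P f g) := by
      refine ContinuousLinearMap.ext fun k => ?_
      simp only [ContinuousLinearMap.sub_apply, ContinuousLinearMap.add_apply,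
        ContinuousLinearMap.comp_apply, ContinuousLinearMap.mul_apply']
      exact key f g k
    rw [heq]
    exact hsum
  -- hence W f g = 0 for all f g, i.e. T is multiplicative
  have hmul : ∀ f g : C₀(X, ℂ), T (f * g) = T f * T g := by
    intro f g
    have h0 : W f g = 0 := by
      refine eq_zero_of_weak_cpt hX (W f g) ?_
      obtain ⟨K, hK, hKm⟩ := hMcpt f g
      exact ⟨K, hK, fun g' hg' => hKm g' hg'⟩
    have h2 := hWapply f g
    rw [h0] at h2
    have h1 : E.symm (T f * T g) = f * g := sub_eq_zero.mp h2.symm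
    calc T (f * g) = T (E.symm (T f * T g)) := by rw [h1]
      _ = T f * T g := hTQ _
  refine ⟨hmul, ?_⟩
  -- construct the point maps via characters
  have hψ : ∀ y : Y, ∃ x : X, ∀ f : C₀(X, ℂ), T f y = f x := by
    intro y
    have hm : ∀ f g : C₀(X, ℂ),
        ((evalCLM y).comp T) (f * g) = ((evalCLM y).comp T) f * ((evalCLM y).comp T) g := by
      intro f g
      simp only [ContinuousLinearMap.comp_apply, evalCLM_apply]
      rw [hmul, ZeroAtInftyContinuousMap.coe_mul]
      rfl
    have hne : ∃ f, ((evalCLM y).comp T) f ≠ 0 := by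
      obtain ⟨u, hu1, _, _⟩ := exists_bump (X := Y) (V := Set.univ) isOpen_univ (Set.mem_univ y)
      refine ⟨E.symm u, ?_⟩
      simp only [ContinuousLinearMap.comp_apply, evalCLM_apply, hTQ, hu1]
      exact one_ne_zero
    obtain ⟨x, hx⟩ := exists_eval _ hm hne
    exact ⟨x, fun f => hx f⟩
  have hQm : ∀ u v : C₀(Y, ℂ), E.symm (u * v) = E.symm u * E.symm v := by
    intro u v
    apply E.injective
    rw [hET, hET, hTQ, hmul, hTQ, hTQ]
  have hφ : ∀ x : X, ∃ y : Y, ∀ u : C₀(Y, ℂ), E.symm u x = u y := by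
    intro x
    have hm : ∀ u v : C₀(Y, ℂ),
        ((evalCLM x).comp (E.symm : C₀(Y, ℂ) →L[ℂ] C₀(X, ℂ))) (u * v) =
        ((evalCLM x).comp (E.symm : C₀(Y, ℂ) →L[ℂ] C₀(X, ℂ))) u *
        ((evalCLM x).comp (E.symm : C₀(Y, ℂ) →L[ℂ] C₀(X, ℂ))) v := by
      intro u v
      simp only [ContinuousLinearMap.comp_apply, evalCLM_apply,
        ContinuousLinearEquiv.coe_coe]
      rw [hQm, ZeroAtInftyContinuousMap.coe_mul]
      rfl
    have hne : ∃ u, ((evalCLM x).comp (E.symm : C₀(Y, ℂ) →L[ℂ] C₀(X, ℂ))) u ≠ 0 := by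
      obtain ⟨b, hb1, _, _⟩ := exists_bump (X := X) (V := Set.univ) isOpen_univ (Set.mem_univ x)
      refine ⟨T b, ?_⟩
      simp only [ContinuousLinearMap.comp_apply, evalCLM_apply,
        ContinuousLinearEquiv.coe_coe, hQT, hb1]
      exact one_ne_zero
    obtain ⟨y, hy⟩ := exists_eval _ hm hne
    exact ⟨y, fun u => hy u⟩
  set ψ0 : Y → X := fun y => (hψ y).choose with hψ0def
  have hψ0 : ∀ y f, T f y = f (ψ0 y) := fun y => (hψ y).choose_spec
  set φ0 : X → Y := fun x => (hφ x).choose with hφ0def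
  have hφ0 : ∀ x u, E.symm u x = u (φ0 x) := fun x => (hφ x).choose_spec
  -- inverse identities
  have hleft : ∀ y, φ0 (ψ0 y) = y := by
    intro y
    by_contra hne
    obtain ⟨u, hu1, hu0⟩ := exists_separating (X := Y) hne
    have h1 : u (φ0 (ψ0 y)) = u y := by
      rw [← hφ0 (ψ0 y) u]
      rw [← hψ0 y (E.symm u), hTQ]
    rw [hu1, hu0] at h1
    exact one_ne_zero h1
  have hright : ∀ x, ψ0 (φ0 x) = x := by
    intro x
    by_contra hne
    obtain ⟨f, hf1, hf0⟩ := exists_separating (X := X) hne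
    have h1 : f (ψ0 (φ0 x)) = f x := by
      rw [← hψ0 (φ0 x) f]
      have := hφ0 x (T f)
      rw [hQT] at this
      exact this.symm
    rw [hf1, hf0] at h1
    exact one_ne_zero h1
  -- continuity
  have hψcont : Continuous ψ0 := by
    rw [continuous_iff_continuousAt]
    intro y
    intro s hs
    rw [Filter.mem_map]
    obtain ⟨U, hUs, hUopen, hUmem⟩ := mem_nhds_iff.mp hs
    obtain ⟨f, hf1, hf0, _⟩ := exists_bump (X := X) hUopen hUmem
    have hV : IsOpen ((T f) ⁻¹' ({0}ᶜ : Set ℂ)) :=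
      (isOpen_compl_singleton).preimage (map_continuous (T f))
    refine Filter.mem_of_superset (hV.mem_nhds ?_) ?_
    · show T f y ∈ ({0}ᶜ : Set ℂ)
      rw [hψ0 y f, hf1]
      simp
    · intro y' hy'
      have h1 : f (ψ0 y') ≠ 0 := by
        rw [← hψ0 y' f]; exact hy'
      have h2 : ψ0 y' ∈ U := by
        by_contra hc
        exact h1 (hf0 _ hc)
      exact hUs h2
  have hφcont : Continuous φ0 := by
    rw [continuous_iff_continuousAt]
    intro x
    intro s hs
    rw [Filter.mem_map]
    obtain ⟨U, hUs, hUopen, hUmem⟩ := mem_nhds_iff.mp hs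
    obtain ⟨u, hu1, hu0, _⟩ := exists_bump (X := Y) hUopen hUmem
    have hV : IsOpen ((E.symm u) ⁻¹' ({0}ᶜ : Set ℂ)) :=
      (isOpen_compl_singleton).preimage (map_continuous (E.symm u))
    refine Filter.mem_of_superset (hV.mem_nhds ?_) ?_
    · show E.symm u x ∈ ({0}ᶜ : Set ℂ)
      rw [hφ0 x u, hu1]
      simp
    · intro x' hx'
      have h1 : u (φ0 x') ≠ 0 := by
        rw [← hφ0 x' u]; exact hx'
      have h2 : φ0 x' ∈ U := by
        by_contra hc
        exact h1 (hu0 _ hc)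
      exact hUs h2
  exact ⟨⟨⟨ψ0, φ0, hleft, hright⟩, hψcont, hφcont⟩, fun f y => hψ0 y f⟩

end PSWIM
end

section
/- Let n ∈ ℕ and let E₁, …, Eₙ and F be Banach spaces over ℂ. The collection of compact bounded n-linear maps from E₁ × ⋯ × Eₙ to F is a closed linear subspace of the Banach space of all bounded n-linear maps from E₁ × ⋯ × Eₙ to F with the operator norm: it contains 0, is closed under addition and scalar multiplication, and is closed in the operator norm topology. -/
open Pointwise

/-- A bounded `n`-linear map `T` is *compact* if the norm closure of the image under `T` of
the product of the open unit balls is compact. -/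
def IsCompactMultilinearMap {n : ℕ} {E : Fin n → Type*} {F : Type*}
    [∀ i, NormedAddCommGroup (E i)] [∀ i, NormedSpace ℂ (E i)]
    [NormedAddCommGroup F] [NormedSpace ℂ F]
    (T : ContinuousMultilinearMap ℂ E F) : Prop :=
  IsCompact (closure (⇑T '' {x : ∀ i, E i | ∀ i, ‖x i‖ < 1}))

section aux

variable {n : ℕ} {E : Fin n → Type*} {F : Type*}
    [∀ i, NormedAddCommGroup (E i)] [∀ i, NormedSpace ℂ (E i)]
    [NormedAddCommGroup F] [NormedSpace ℂ F]

lemma IsCompactMultilinearMap.tb {T : ContinuousMultilinearMap ℂ E F}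
    (h : IsCompactMultilinearMap T) :
    TotallyBounded (⇑T '' {x : ∀ i, E i | ∀ i, ‖x i‖ < 1}) :=
  TotallyBounded.subset subset_closure (IsCompact.totallyBounded h)

lemma norm_apply_le_of_mem_ball (T : ContinuousMultilinearMap ℂ E F)
    {x : ∀ i, E i} (hx : ∀ i, ‖x i‖ < 1) : ‖T x‖ ≤ ‖T‖ := by
  calc ‖T x‖ ≤ ‖T‖ * ∏ i, ‖x i‖ := T.le_opNorm x
    _ ≤ ‖T‖ * 1 := mul_le_mul_of_nonneg_left
        (Finset.prod_le_one (fun i _ => norm_nonneg _) (fun i _ => (hx i).le)) (norm_nonneg T)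
    _ = ‖T‖ := mul_one _

end aux

/-- the compact bounded `n`-linear maps from `E₁ × ⋯ × Eₙ` to `F` form a closed
linear subspace of the Banach space of bounded `n`-linear maps: they contain `0`, are closed
under addition and scalar multiplication, and form a closed set in the operator norm. -/
theorem isCompactMultilinearMap_closed_subspace (n : ℕ) (E : Fin n → Type*)
    [∀ i, NormedAddCommGroup (E i)] [∀ i, NormedSpace ℂ (E i)] [∀ i, CompleteSpace (E i)]
    (F : Type*) [NormedAddCommGroup F] [NormedSpace ℂ F] [CompleteSpace F] :
    IsCompactMultilinearMap (0 : ContinuousMultilinearMap ℂ E F) ∧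
    (∀ T S : ContinuousMultilinearMap ℂ E F,
      IsCompactMultilinearMap T → IsCompactMultilinearMap S → IsCompactMultilinearMap (T + S)) ∧
    (∀ (c : ℂ) (T : ContinuousMultilinearMap ℂ E F),
      IsCompactMultilinearMap T → IsCompactMultilinearMap (c • T)) ∧
    IsClosed {T : ContinuousMultilinearMap ℂ E F | IsCompactMultilinearMap T} := by
  refine ⟨?_, ?_, ?_, ?_⟩
  · -- zero map
    have hsub : ⇑(0 : ContinuousMultilinearMap ℂ E F) '' {x : ∀ i, E i | ∀ i, ‖x i‖ < 1}
        ⊆ ({0} : Set F) := by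
      rintro _ ⟨x, -, rfl⟩; simp
    have : IsCompact ({0} : Set F) := isCompact_singleton
    exact this.of_isClosed_subset isClosed_closure
      (closure_minimal hsub this.isClosed)
  · -- addition
    intro T S hT hS
    have hK : IsCompact ((closure (⇑T '' {x : ∀ i, E i | ∀ i, ‖x i‖ < 1})) +
        (closure (⇑S '' {x : ∀ i, E i | ∀ i, ‖x i‖ < 1}))) := hT.add hS
    refine hK.of_isClosed_subset isClosed_closure (closure_minimal ?_ hK.isClosed)
    rintro _ ⟨x, hx, rfl⟩
    exact Set.add_mem_add (subset_closure ⟨x, hx, rfl⟩) (subset_closure ⟨x, hx, rfl⟩)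
  · -- scalar multiplication
    intro c T hT
    have hK : IsCompact ((c • ·) '' closure (⇑T '' {x : ∀ i, E i | ∀ i, ‖x i‖ < 1})) :=
      hT.image (continuous_const_smul c)
    refine hK.of_isClosed_subset isClosed_closure (closure_minimal ?_ hK.isClosed)
    rintro _ ⟨x, hx, rfl⟩
    exact ⟨T x, subset_closure ⟨x, hx, rfl⟩, rfl⟩
  · -- closedness
    apply isClosed_of_closure_subset
    intro T hT
    show IsCompactMultilinearMap T
    apply TotallyBounded.isCompact_of_isClosed _ isClosed_closure
    apply TotallyBounded.closure
    rw [Metric.totallyBounded_iff]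
    intro ε hε
    obtain ⟨S, hS, hTS⟩ : ∃ S ∈ {T : ContinuousMultilinearMap ℂ E F | IsCompactMultilinearMap T},
        dist T S < ε / 2 := Metric.mem_closure_iff.mp hT (ε / 2) (by positivity)
    obtain ⟨t, ht, hcov⟩ := Metric.totallyBounded_iff.mp hS.tb (ε / 2) (by positivity)
    refine ⟨t, ht, ?_⟩
    rintro _ ⟨x, hx, rfl⟩
    obtain ⟨y, hy, hby⟩ := Set.mem_iUnion₂.mp (hcov ⟨x, hx, rfl⟩)
    refine Set.mem_iUnion₂.mpr ⟨y, hy, ?_⟩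
    have h3 : dist (T x) (S x) < ε / 2 := by
      rw [dist_eq_norm]
      calc ‖T x - S x‖ = ‖(T - S) x‖ := by simp
        _ ≤ ‖T - S‖ := norm_apply_le_of_mem_ball (T - S) hx
        _ = dist T S := (dist_eq_norm T S).symm
        _ < ε / 2 := hTS
    calc dist (T x) y ≤ dist (T x) (S x) + dist (S x) y := dist_triangle _ _ _
      _ < ε / 2 + ε / 2 := add_lt_add h3 hby
      _ = ε := by ring
end

section
/- Let E₁ and E₂ be normed spaces over ℂ, let F be a Banach space, let T : E₁ × E₂ → F be a bounded bilinear map, and let T̃ : E₁ ⊗ E₂ → F be the unique linear map with T̃(x ⊗ y) = T(x,y); equip E₁ ⊗ E₂ with the projective tensor seminorm π. Then T is a compact bilinear map if and only if the norm closure of T̃({z ∈ E₁ ⊗ E₂ : π(z) < 1}) is a compact subset of F. -/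
open Metric TensorProduct

/-- The projective tensor seminorm on `E₁ ⊗ E₂`:
`π(z) = inf { Σᵢ ‖xᵢ‖·‖yᵢ‖ : z = Σᵢ xᵢ ⊗ yᵢ }`. -/
noncomputable def projTensorSeminorm {E₁ E₂ : Type*}
    [NormedAddCommGroup E₁] [NormedSpace ℂ E₁] [NormedAddCommGroup E₂] [NormedSpace ℂ E₂]
    (z : E₁ ⊗[ℂ] E₂) : ℝ :=
  sInf {c : ℝ | ∃ l : List (E₁ × E₂),
    z = (l.map fun p => p.1 ⊗ₜ[ℂ] p.2).sum ∧ c = (l.map fun p => ‖p.1‖ * ‖p.2‖).sum}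

section Aux

variable {E₁ E₂ F : Type*}
    [NormedAddCommGroup E₁] [NormedSpace ℂ E₁] [NormedAddCommGroup E₂] [NormedSpace ℂ E₂]
    [NormedAddCommGroup F] [NormedSpace ℂ F]

lemma projTensor_bddBelow (z : E₁ ⊗[ℂ] E₂) :
    BddBelow {c : ℝ | ∃ l : List (E₁ × E₂),
      z = (l.map fun p => p.1 ⊗ₜ[ℂ] p.2).sum ∧ c = (l.map fun p => ‖p.1‖ * ‖p.2‖).sum} := by
  refine ⟨0, fun c hc => ?_⟩
  obtain ⟨l, -, rfl⟩ := hc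
  refine List.sum_nonneg ?_
  intro a ha
  obtain ⟨p, -, rfl⟩ := List.mem_map.mp ha
  positivity

lemma projTensor_nonempty (z : E₁ ⊗[ℂ] E₂) :
    Set.Nonempty {c : ℝ | ∃ l : List (E₁ × E₂),
      z = (l.map fun p => p.1 ⊗ₜ[ℂ] p.2).sum ∧ c = (l.map fun p => ‖p.1‖ * ‖p.2‖).sum} := by
  suffices h : ∃ l : List (E₁ × E₂), z = (l.map fun p => p.1 ⊗ₜ[ℂ] p.2).sum by
    obtain ⟨l, hl⟩ := h; exact ⟨_, l, hl, rfl⟩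
  induction z using TensorProduct.induction_on with
  | zero => exact ⟨[], by simp⟩
  | tmul x y => exact ⟨[(x, y)], by simp⟩
  | add a b ha hb =>
      obtain ⟨l1, h1⟩ := ha; obtain ⟨l2, h2⟩ := hb
      exact ⟨l1 ++ l2, by simp [h1, h2]⟩

lemma list_sum_map_mul_right {α : Type*} (l : List α) (f : α → ℝ) (b : ℝ) :
    (l.map fun a => f a * b).sum = (l.map f).sum * b := by
  induction l with
  | nil => simp
  | cons a l ih => simp [ih, add_mul]

lemma list_smul_sum_mem {C : Set F} (hC : Convex ℝ C) (h0 : (0 : F) ∈ C) :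
    ∀ l : List (ℝ × F), (∀ p ∈ l, 0 ≤ p.1 ∧ p.2 ∈ C) →
      ∀ s : ℝ, (l.map Prod.fst).sum ≤ s → ∃ c ∈ C, (l.map fun p => p.1 • p.2).sum = s • c := by
  intro l
  induction l with
  | nil => exact fun _ s _ => ⟨0, h0, by simp⟩
  | cons p l ih =>
    intro hmem s hs
    have hp := hmem p List.mem_cons_self
    have htail : ∀ q ∈ l, 0 ≤ q.1 ∧ q.2 ∈ C := fun q hq => hmem q (List.mem_cons_of_mem _ hq)
    have htn : 0 ≤ (l.map Prod.fst).sum := by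
      refine List.sum_nonneg ?_
      intro a ha
      obtain ⟨q, hq, rfl⟩ := List.mem_map.mp ha
      exact (htail q hq).1
    simp only [List.map_cons, List.sum_cons] at hs ⊢
    obtain ⟨c, hcC, hc⟩ := ih htail (s - p.1) (by linarith)
    have hs0 : 0 ≤ s := by linarith [hp.1]
    rcases eq_or_lt_of_le hs0 with h | h
    · have hp1 : p.1 = 0 := by linarith [hp.1]
      refine ⟨c, hcC, ?_⟩
      rw [hc, hp1, ← h]
      simp
    · refine ⟨(p.1 / s) • p.2 + ((s - p.1) / s) • c,
        hC hp.2 hcC (div_nonneg hp.1 hs0) (div_nonneg (by linarith) hs0)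
          (by field_simp; ring), ?_⟩
      rw [hc, smul_add, smul_smul, smul_smul]
      rw [mul_div_cancel₀ _ h.ne', mul_div_cancel₀ _ h.ne']

end Aux

/-- a bounded bilinear map `T : E₁ × E₂ → F` is compact if and only if the
associated linear map `T̃ : E₁ ⊗ E₂ → F` (with `T̃(x ⊗ y) = T(x,y)`) maps the open unit ball
of the projective tensor seminorm to a relatively compact set. -/
theorem compact_bilinear_iff_tensor_map_compact {E₁ E₂ F : Type*}
    [NormedAddCommGroup E₁] [NormedSpace ℂ E₁] [NormedAddCommGroup E₂] [NormedSpace ℂ E₂]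
    [NormedAddCommGroup F] [NormedSpace ℂ F] [CompleteSpace F]
    (T : E₁ →L[ℂ] E₂ →L[ℂ] F) (T' : E₁ ⊗[ℂ] E₂ →ₗ[ℂ] F)
    (hT' : ∀ (x : E₁) (y : E₂), T' (x ⊗ₜ[ℂ] y) = T x y) :
    IsCompact (closure (Set.image2 (fun x y => T x y) (ball (0 : E₁) 1) (ball (0 : E₂) 1))) ↔
    IsCompact (closure (⇑T' '' {z : E₁ ⊗[ℂ] E₂ | projTensorSeminorm z < 1})) := by
  set A := Set.image2 (fun x y => T x y) (ball (0 : E₁) 1) (ball (0 : E₂) 1) with hA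
  have h0A : (0 : F) ∈ A :=
    ⟨0, mem_ball_self one_pos, 0, mem_ball_self one_pos, by simp⟩
  constructor
  · intro hK
    set C := convexHull ℝ (closure A) with hCdef
    have hCconv : Convex ℝ C := convex_convexHull ℝ _
    have h0C : (0 : F) ∈ C := subset_convexHull ℝ _ (subset_closure h0A)
    have hsub : ⇑T' '' {z : E₁ ⊗[ℂ] E₂ | projTensorSeminorm z < 1} ⊆ C := by
      rintro _ ⟨z, hz, rfl⟩
      obtain ⟨t, ⟨l, hlz, hlt⟩, ht1⟩ :=
        exists_lt_of_csInf_lt (projTensor_nonempty z) hz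
      have ht0 : 0 ≤ t := by
        rw [hlt]
        refine List.sum_nonneg ?_
        intro a ha
        obtain ⟨p, -, rfl⟩ := List.mem_map.mp ha
        positivity
      set r := Real.sqrt ((t + 1) / 2) with hrdef
      have hr2 : r ^ 2 = (t + 1) / 2 := Real.sq_sqrt (by linarith)
      have hrpos : 0 < r := Real.sqrt_pos.mpr (by linarith)
      have hr1 : r < 1 := by nlinarith
      classical
      set v : E₁ × E₂ → F := fun p =>
        if p.1 = 0 ∨ p.2 = 0 then 0
        else T ((↑(r * ‖p.1‖⁻¹) : ℂ) • p.1) ((↑(r * ‖p.2‖⁻¹) : ℂ) • p.2) with hvdef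
      have fact1 : ∀ p : E₁ × E₂, (‖p.1‖ * ‖p.2‖ / r ^ 2) • v p = T p.1 p.2 := by
        intro p
        by_cases h : p.1 = 0 ∨ p.2 = 0
        · rcases h with h | h <;> simp [hvdef, h]
        · push_neg at h
          obtain ⟨hx, hy⟩ := h
          have hx' : ‖p.1‖ ≠ 0 := norm_ne_zero_iff.mpr hx
          have hy' : ‖p.2‖ ≠ 0 := norm_ne_zero_iff.mpr hy
          simp only [hvdef, if_neg (not_or.mpr ⟨hx, hy⟩)]
          rw [show T ((↑(r * ‖p.1‖⁻¹) : ℂ) • p.1) = (↑(r * ‖p.1‖⁻¹) : ℂ) • T p.1 from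
              map_smul T _ _,
            ContinuousLinearMap.smul_apply, map_smul, Complex.coe_smul, Complex.coe_smul,
            smul_smul, smul_smul,
            show ‖p.1‖ * ‖p.2‖ / r ^ 2 * (r * ‖p.1‖⁻¹) * (r * ‖p.2‖⁻¹) = 1 by
              field_simp,
            one_smul]
      have fact2 : ∀ p : E₁ × E₂, v p ∈ closure A := by
        intro p
        by_cases h : p.1 = 0 ∨ p.2 = 0
        · simp only [hvdef, if_pos h]
          exact subset_closure h0A
        · push_neg at h
          obtain ⟨hx, hy⟩ := h
          simp only [hvdef, if_neg (not_or.mpr ⟨hx, hy⟩)]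
          refine subset_closure ⟨_, ?_, _, ?_, rfl⟩
          · rw [mem_ball_zero_iff, norm_smul, Complex.norm_real, Real.norm_eq_abs,
              abs_of_pos (mul_pos hrpos (inv_pos.mpr (norm_pos_iff.mpr hx)))]
            rw [mul_assoc, inv_mul_cancel₀ (norm_ne_zero_iff.mpr hx), mul_one]
            exact hr1
          · rw [mem_ball_zero_iff, norm_smul, Complex.norm_real, Real.norm_eq_abs,
              abs_of_pos (mul_pos hrpos (inv_pos.mpr (norm_pos_iff.mpr hy)))]
            rw [mul_assoc, inv_mul_cancel₀ (norm_ne_zero_iff.mpr hy), mul_one]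
            exact hr1
      have hTz : T' z = (l.map fun p => (‖p.1‖ * ‖p.2‖ / r ^ 2) • v p).sum := by
        rw [hlz, map_list_sum, List.map_map,
          show (⇑T' ∘ fun p : E₁ × E₂ => p.1 ⊗ₜ[ℂ] p.2) =
              fun p : E₁ × E₂ => (‖p.1‖ * ‖p.2‖ / r ^ 2) • v p from
            funext fun p => by simp only [Function.comp_apply, hT', fact1]]
      obtain ⟨c, hcC, hc⟩ := list_smul_sum_mem hCconv h0C
        (l.map fun p => (‖p.1‖ * ‖p.2‖ / r ^ 2, v p))
        (by
          rintro q hq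
          obtain ⟨p, hp, rfl⟩ := List.mem_map.mp hq
          exact ⟨by positivity, subset_convexHull ℝ _ (fact2 p)⟩)
        1
        (by
          rw [List.map_map]
          have : (Prod.fst ∘ fun p : E₁ × E₂ => (‖p.1‖ * ‖p.2‖ / r ^ 2, v p)) =
              fun p : E₁ × E₂ => ‖p.1‖ * ‖p.2‖ * (r ^ 2)⁻¹ := by
            funext p; simp [div_eq_mul_inv]
          rw [this, list_sum_map_mul_right, ← hlt, ← div_eq_mul_inv,
            div_le_one (by positivity)]
          nlinarith)
      rw [List.map_map] at hc
      have : (l.map ((fun p : ℝ × F => p.1 • p.2) ∘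
          fun p : E₁ × E₂ => (‖p.1‖ * ‖p.2‖ / r ^ 2, v p))).sum =
          (l.map fun p => (‖p.1‖ * ‖p.2‖ / r ^ 2) • v p).sum := rfl
      rw [this, ← hTz, one_smul] at hc
      rw [hc]
      exact hcC
    have hTB : TotallyBounded (convexHull ℝ (closure A)) :=
      totallyBounded_convexHull.mpr hK.totallyBounded
    have hcomp : IsCompact (closure C) :=
      TotallyBounded.isCompact_of_isClosed hTB.closure isClosed_closure
    exact hcomp.of_isClosed_subset isClosed_closure (closure_mono hsub)
  · intro hK
    have hsub : A ⊆ ⇑T' '' {z : E₁ ⊗[ℂ] E₂ | projTensorSeminorm z < 1} := by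
      rintro _ ⟨x, hx, y, hy, rfl⟩
      refine ⟨x ⊗ₜ[ℂ] y, ?_, hT' x y⟩
      have hle : projTensorSeminorm (x ⊗ₜ[ℂ] y) ≤ ‖x‖ * ‖y‖ :=
        csInf_le (projTensor_bddBelow _) ⟨[(x, y)], by simp, by simp⟩
      rw [mem_ball_zero_iff] at hx hy
      have h1 : 0 ≤ ‖x‖ := norm_nonneg x
      have h2 : 0 ≤ ‖y‖ := norm_nonneg y
      exact lt_of_le_of_lt hle (by nlinarith)
    exact hK.of_isClosed_subset isClosed_closure (closure_mono hsub)
end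

section
/- Let A = ℓ∞(ℕ,ℂ) be the Banach algebra of bounded complex sequences with pointwise multiplication and the supremum norm, with unit 1 (the constant sequence with value 1), and define T : A → A by T(a) = a + a₀·1, where a₀ is the term of a at index 0. Then T is the sum of the identity homomorphism and a rank-one bounded homomorphism, yet T is not a cf-homomorphism: its failure of multiplicativity S_T is not a compact bilinear map. -/
open Metric
open scoped ENNReal
set_option maxHeartbeats 1000000
set_option synthInstance.maxHeartbeats 200000

noncomputable section CF15

local notation "A" => lp (fun _ : ℕ => ℂ) ∞

noncomputable def cf15ev0 : A →L[ℂ] ℂ :=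
  LinearMap.mkContinuous
    { toFun := fun a => a 0
      map_add' := fun a b => by simp [lp.coeFn_add]
      map_smul' := fun c a => by simp [lp.coeFn_smul] }
    1 (fun a => by rw [one_mul]; exact lp.norm_apply_le_norm (by norm_num) a 0)

noncomputable def cf15T2 : A →L[ℂ] A := cf15ev0.smulRight 1

lemma cf15T2_apply (a : A) : cf15T2 a = a 0 • (1 : A) := rfl

lemma cf15_one_norm : ‖(1 : A)‖ ≤ 1 := by
  apply lp.norm_le_of_forall_le zero_le_one
  intro i
  have : (1 : A) i = 1 := congrFun lp.infty_coeFn_one i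
  simp [this]

lemma cf15_single_norm (n : ℕ) : ‖lp.single (E := fun _ : ℕ => ℂ) ∞ n 1‖ ≤ 1 := by
  apply lp.norm_le_of_forall_le zero_le_one
  intro i
  rcases eq_or_ne i n with rfl | h
  · rw [lp.single_apply_self]; simp
  · rw [lp.single_apply_ne _ _ _ h]; simp

lemma cf15_smul_apply (c : ℂ) (f : A) (i : ℕ) : (c • f) i = c • f i :=
  congrFun (lp.coeFn_smul c f) i

/-- the test sequence -/
noncomputable def cf15u (n : ℕ) : A := (1/4 : ℂ) • lp.single ∞ (n + 1) 1

noncomputable def cf15a (n : ℕ) : A := (1/2 : ℂ) • lp.single ∞ (n + 1) 1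

noncomputable def cf15b : A := (1/2 : ℂ) • 1

lemma cf15a_zero (n : ℕ) : (cf15a n) 0 = 0 := by
  rw [cf15a, cf15_smul_apply, lp.single_apply_ne (E := fun _ : ℕ => ℂ) ∞ (n+1) 1 (Nat.succ_ne_zero n).symm,
    smul_zero]

lemma cf15b_zero : cf15b 0 = (1/2 : ℂ) := by
  rw [cf15b, cf15_smul_apply, show (1 : A) 0 = 1 from congrFun lp.infty_coeFn_one 0]
  simp

lemma cf15ab (n : ℕ) : cf15a n * cf15b = (1/2 : ℂ) • cf15a n := by
  rw [cf15b, mul_smul_comm, mul_one]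

lemma cf15ab_zero (n : ℕ) : (cf15a n * cf15b) 0 = 0 := by
  rw [cf15ab, cf15_smul_apply, cf15a_zero, smul_zero]

lemma cf15a_mem (n : ℕ) : cf15a n ∈ ball (0 : A) 1 := by
  rw [mem_ball_zero_iff, cf15a, lp.norm_const_smul (by norm_num : (∞ : ℝ≥0∞) ≠ 0)]
  have h1 : ‖(1/2 : ℂ)‖ = 1/2 := by simp
  have h2 := cf15_single_norm (n + 1)
  rw [h1]
  nlinarith [norm_nonneg (lp.single (E := fun _ : ℕ => ℂ) ∞ (n+1) 1)]

lemma cf15b_mem : cf15b ∈ ball (0 : A) 1 := by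
  rw [mem_ball_zero_iff, cf15b, lp.norm_const_smul (by norm_num : (∞ : ℝ≥0∞) ≠ 0)]
  have h1 : ‖(1/2 : ℂ)‖ = 1/2 := by simp
  have h2 := cf15_one_norm
  rw [h1]
  nlinarith [norm_nonneg (1 : A)]

lemma cf15_sep {i j : ℕ} (hij : i ≠ j) : (1/4 : ℝ) ≤ dist (cf15u i) (cf15u j) := by
  rw [dist_eq_norm]
  have hui : (cf15u i) (i+1) = (1/4 : ℂ) := by
    rw [cf15u, cf15_smul_apply, lp.single_apply_self]; simp
  have huj : (cf15u j) (i+1) = 0 := by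
    rw [cf15u, cf15_smul_apply, lp.single_apply_ne (E := fun _ : ℕ => ℂ) ∞ (j+1) 1 (by omega : i + 1 ≠ j + 1), smul_zero]
  have h1 : (cf15u i - cf15u j) (i+1) = (1/4 : ℂ) := by
    rw [congrFun (lp.coeFn_sub (cf15u i) (cf15u j)) (i+1)]
    show (cf15u i) (i+1) - (cf15u j) (i+1) = _
    rw [hui, huj, sub_zero]
  have h2 : ‖(cf15u i - cf15u j) (i+1)‖ ≤ ‖cf15u i - cf15u j‖ :=
    lp.norm_apply_le_norm (by norm_num) _ _
  rw [h1] at h2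
  simpa using h2

end CF15

/-- on `A = ℓ∞(ℕ,ℂ)` with pointwise product and unit `1` (the constant
sequence `1`), the map `T(a) = a + a₀ • 1` is the sum of the identity homomorphism and the
rank-one bounded homomorphism `T₂(a) = a₀ • 1`, yet `T` is not a cf-homomorphism: its
failure of multiplicativity `S_T` is not a compact bilinear map. -/
theorem linfty_homomorphism_plus_rank_one_not_cf :
    ∃ T T₂ : lp (fun _ : ℕ => ℂ) ∞ →L[ℂ] lp (fun _ : ℕ => ℂ) ∞,
      (∀ a : lp (fun _ : ℕ => ℂ) ∞, T₂ a = a 0 • (1 : lp (fun _ : ℕ => ℂ) ∞)) ∧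
      (∀ a b : lp (fun _ : ℕ => ℂ) ∞, T₂ (a * b) = T₂ a * T₂ b) ∧
      (∀ a : lp (fun _ : ℕ => ℂ) ∞,
        T₂ a ∈ Submodule.span ℂ {(1 : lp (fun _ : ℕ => ℂ) ∞)}) ∧
      (∀ a : lp (fun _ : ℕ => ℂ) ∞, T a = a + T₂ a) ∧
      ¬ IsCompact (closure (Set.image2 (fun a b => T a * T b - T (a * b))
        (ball (0 : lp (fun _ : ℕ => ℂ) ∞) 1) (ball (0 : lp (fun _ : ℕ => ℂ) ∞) 1))) := by
  have hEnn : (∞ : ℝ≥0∞) ≠ 0 := by norm_num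
  refine ⟨ContinuousLinearMap.id ℂ (lp (fun _ : ℕ => ℂ) ∞) + cf15T2, cf15T2,
    fun a => rfl, ?_, ?_, fun a => rfl, ?_⟩
  · intro a b
    show ((a * b) 0) • (1 : lp (fun _ : ℕ => ℂ) ∞) = (a 0 • 1) * (b 0 • 1)
    rw [smul_mul_smul_comm, one_mul, congrFun (lp.infty_coeFn_mul a b) 0]
    rfl
  · intro a
    rw [cf15T2_apply]
    exact Submodule.smul_mem _ _ (Submodule.mem_span_singleton_self _)
  · intro hK
    set T : lp (fun _ : ℕ => ℂ) ∞ →L[ℂ] lp (fun _ : ℕ => ℂ) ∞ :=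
      ContinuousLinearMap.id ℂ (lp (fun _ : ℕ => ℂ) ∞) + cf15T2 with hT
    have hTapp : ∀ a, T a = a + a 0 • 1 := fun a => rfl
    have hTa : ∀ n, T (cf15a n) = cf15a n := by
      intro n
      rw [hTapp, cf15a_zero, zero_smul, add_zero]
    have hTb : T cf15b = 1 := by
      rw [hTapp, cf15b_zero, cf15b, ← add_smul]
      norm_num
    have hS : ∀ n, T (cf15a n) * T cf15b - T (cf15a n * cf15b) = cf15u n := by
      intro n
      have hTab : T (cf15a n * cf15b) = (1/2 : ℂ) • cf15a n := by
        rw [hTapp, cf15ab_zero, zero_smul, add_zero, cf15ab]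
      rw [hTa, hTb, mul_one, hTab]
      have hhalf : cf15a n - (1/2 : ℂ) • cf15a n = ((1 : ℂ) - 1/2) • cf15a n := by
        rw [sub_smul, one_smul]
      rw [hhalf, cf15a, cf15u, smul_smul]
      norm_num
    have hu_mem : ∀ n, cf15u n ∈ closure (Set.image2 (fun a b => T a * T b - T (a * b))
        (ball (0 : lp (fun _ : ℕ => ℂ) ∞) 1) (ball (0 : lp (fun _ : ℕ => ℂ) ∞) 1)) :=
      fun n => subset_closure ⟨cf15a n, cf15a_mem n, cf15b, cf15b_mem, hS n⟩
    obtain ⟨x, -, φ, hφ, hconv⟩ := hK.isSeqCompact hu_mem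
    have hc : CauchySeq (cf15u ∘ φ) := hconv.cauchySeq
    rw [Metric.cauchySeq_iff'] at hc
    obtain ⟨N, hN⟩ := hc (1/4) (by norm_num)
    have h1 := hN (N+1) (by omega)
    have hne : φ (N+1) ≠ φ N := by
      exact fun h => absurd h (hφ (by omega : N < N + 1)).ne'
    have h2 := cf15_sep hne
    simp only [Function.comp_apply] at h1
    linarith
end

section
/- Let A = c₀ = C₀(ℕ,ℂ) be the Banach algebra of complex sequences converging to 0, with pointwise multiplication and the supremum norm, and let T : A → A be the bounded linear map T(a) = 2a. Then: (i) A has compact multiplication, i.e. for every a ∈ A the multiplication operator b ↦ a·b is a compact linear operator on A, and consequently for every a ∈ A the linear maps b ↦ S_T(a,b) and b ↦ S_T(b,a) are compact (T is a semi-cf-homomorphism); (ii) nevertheless the bilinear map S_T, which is given by S_T(a,b) = 2ab, is not weakly compact, so T is not a wcf-homomorphism. -/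
open Metric ZeroAtInfty

open Filter Topology

namespace C0Aux

/-- A finitely supported sequence as an element of `C₀(ℕ, ℂ)`. -/
noncomputable def finseq (N : ℕ) (v : Fin N → ℂ) : C₀(ℕ, ℂ) where
  toFun n := if h : n < N then v ⟨n, h⟩ else 0
  continuous_toFun := continuous_of_discreteTopology
  zero_at_infty' := by
    rw [cocompact_eq_cofinite, Nat.cofinite_eq_atTop]
    refine Tendsto.congr' ?_ tendsto_const_nhds
    filter_upwards [eventually_ge_atTop N] with n hn
    simp [Nat.not_lt.mpr hn]

@[simp] lemma finseq_apply (N : ℕ) (v : Fin N → ℂ) (n : ℕ) :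
    finseq N v n = if h : n < N then v ⟨n, h⟩ else 0 := rfl

lemma norm_apply_le (f : C₀(ℕ, ℂ)) (n : ℕ) : ‖f n‖ ≤ ‖f‖ := by
  rw [← ZeroAtInftyContinuousMap.norm_toBCF_eq_norm]
  exact f.toBCF.norm_coe_le_norm n

lemma norm_le_of (f : C₀(ℕ, ℂ)) {M : ℝ} (hM : 0 ≤ M) (h : ∀ n, ‖f n‖ ≤ M) : ‖f‖ ≤ M := by
  rw [← ZeroAtInftyContinuousMap.norm_toBCF_eq_norm]
  exact (BoundedContinuousFunction.norm_le hM).mpr h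

lemma tendsto_coe_atTop (a : C₀(ℕ, ℂ)) : Tendsto (fun n => a n) atTop (𝓝 0) := by
  have := a.zero_at_infty'
  rwa [cocompact_eq_cofinite, Nat.cofinite_eq_atTop] at this

/-- Multiplication by a fixed element of `c₀` is a compact operator. -/
lemma compact_mul_left (a : C₀(ℕ, ℂ)) :
    IsCompact (closure ((fun b => a * b) '' ball (0 : C₀(ℕ, ℂ)) 1)) := by
  refine TotallyBounded.isCompact_of_isClosed (TotallyBounded.closure ?_) isClosed_closure
  rw [Metric.totallyBounded_iff]
  intro ε hε
  obtain ⟨N, hN⟩ := Metric.tendsto_atTop.mp (tendsto_coe_atTop a) (ε / 4) (by positivity)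
  simp only [dist_zero_right] at hN
  set Φ : (Fin N → ℂ) → C₀(ℕ, ℂ) := fun v => finseq N v with hΦ
  have hlip : LipschitzWith 1 Φ := by
    apply LipschitzWith.of_dist_le_mul
    intro v w
    rw [NNReal.coe_one, one_mul, dist_eq_norm, dist_eq_norm]
    refine norm_le_of _ (norm_nonneg _) fun n => ?_
    rw [ZeroAtInftyContinuousMap.sub_apply]
    by_cases h : n < N
    · simpa [hΦ, h] using norm_le_pi_norm (v - w) ⟨n, h⟩
    · simp [hΦ, h]
  have hC : IsCompact (Φ '' Metric.closedBall 0 ‖a‖) :=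
    (isCompact_closedBall _ _).image hlip.continuous
  obtain ⟨t, htfin, htsub⟩ := Metric.totallyBounded_iff.mp hC.totallyBounded (ε / 2)
    (by positivity)
  refine ⟨t, htfin, ?_⟩
  rintro f ⟨b, hb, rfl⟩
  rw [mem_ball, dist_zero_right] at hb
  set v : Fin N → ℂ := fun i => a i * b i with hv
  have hvmem : v ∈ Metric.closedBall (0 : Fin N → ℂ) ‖a‖ := by
    rw [Metric.mem_closedBall, dist_zero_right]
    refine (pi_norm_le_iff_of_nonneg (norm_nonneg a)).mpr fun i => ?_
    calc ‖a i * b i‖ = ‖a (i : ℕ)‖ * ‖b (i : ℕ)‖ := norm_mul _ _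
      _ ≤ ‖a‖ * 1 := mul_le_mul (norm_apply_le a i)
          (le_trans (norm_apply_le b i) hb.le) (norm_nonneg _) (norm_nonneg _)
      _ = ‖a‖ := mul_one _
  have hmem : Φ v ∈ ⋃ y ∈ t, ball y (ε / 2) := htsub (Set.mem_image_of_mem Φ hvmem)
  obtain ⟨y, hyt, hy⟩ := Set.mem_iUnion₂.mp hmem
  refine Set.mem_iUnion₂.mpr ⟨y, hyt, ?_⟩
  have hdist : dist (a * b) (Φ v) ≤ ε / 4 := by
    rw [dist_eq_norm]
    refine norm_le_of _ (by positivity) fun n => ?_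
    rw [ZeroAtInftyContinuousMap.sub_apply, ZeroAtInftyContinuousMap.mul_apply]
    by_cases h : n < N
    · simp [hΦ, hv, h]; positivity
    · have hn : ‖a n‖ < ε / 4 := hN n (Nat.not_lt.mp h)
      simp only [hΦ, hv, finseq_apply, h, dif_neg, not_false_iff, sub_zero]
      calc ‖a n * b n‖ = ‖a n‖ * ‖b n‖ := norm_mul _ _
        _ ≤ ‖a n‖ * 1 := by
            refine mul_le_mul_of_nonneg_left ?_ (norm_nonneg _)
            exact le_trans (norm_apply_le b n) hb.le
        _ ≤ ε / 4 := by rw [mul_one]; exact hn.le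
  rw [mem_ball]
  calc dist (a * b) y ≤ dist (a * b) (Φ v) + dist (Φ v) y := dist_triangle _ _ _
    _ < ε / 4 + ε / 2 := by
        have : dist (Φ v) y < ε / 2 := mem_ball.mp hy
        linarith
    _ ≤ ε := by linarith

lemma compact_mul_right (a : C₀(ℕ, ℂ)) :
    IsCompact (closure ((fun b => b * a) '' ball (0 : C₀(ℕ, ℂ)) 1)) := by
  have : (fun b : C₀(ℕ, ℂ) => b * a) = fun b => a * b := funext fun b => mul_comm b a
  rw [this]; exact compact_mul_left a

/-- Evaluation at a point as a continuous linear functional on `c₀`. -/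
noncomputable def evalC0 (k : ℕ) : C₀(ℕ, ℂ) →L[ℂ] ℂ :=
  LinearMap.mkContinuous
    { toFun := fun f => f k
      map_add' := fun f g => by simp
      map_smul' := fun c f => by simp }
    1 (fun f => by simpa using norm_apply_le f k)

end C0Aux

/-- on `A = c₀ = C₀(ℕ,ℂ)` with pointwise product, the map `T(a) = 2a` is a
bounded linear map such that: (i) `A` has compact multiplication (for every `a`, the operator
`b ↦ a * b` is compact), and consequently for every `a` the linear maps `b ↦ S_T(a,b)` and
`b ↦ S_T(b,a)` are compact (so `T` is a semi-cf-homomorphism); (ii) nevertheless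
`S_T(a,b) = 2ab` and `S_T` is not a weakly compact bilinear map, so `T` is not a
wcf-homomorphism. -/
theorem c0_semi_cf_not_wcf :
    ∃ T : C₀(ℕ, ℂ) →L[ℂ] C₀(ℕ, ℂ),
      (∀ a : C₀(ℕ, ℂ), T a = (2 : ℂ) • a) ∧
      (∀ a : C₀(ℕ, ℂ),
        IsCompact (closure ((fun b => a * b) '' ball (0 : C₀(ℕ, ℂ)) 1)) ∧
        IsCompact (closure ((fun b => b * a) '' ball (0 : C₀(ℕ, ℂ)) 1))) ∧
      (∀ a : C₀(ℕ, ℂ),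
        IsCompact (closure ((fun b => T a * T b - T (a * b)) '' ball (0 : C₀(ℕ, ℂ)) 1)) ∧
        IsCompact (closure ((fun b => T b * T a - T (b * a)) '' ball (0 : C₀(ℕ, ℂ)) 1))) ∧
      (∀ a b : C₀(ℕ, ℂ), T a * T b - T (a * b) = (2 : ℂ) • (a * b)) ∧
      ¬ IsCompact (closure ((toWeakSpace ℂ C₀(ℕ, ℂ)) ''
        (Set.image2 (fun a b => T a * T b - T (a * b))
          (ball (0 : C₀(ℕ, ℂ)) 1) (ball (0 : C₀(ℕ, ℂ)) 1)))) := by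
  classical
  refine ⟨(2 : ℂ) • ContinuousLinearMap.id ℂ C₀(ℕ, ℂ), fun a => rfl, ?_, ?_, ?_, ?_⟩
  · exact fun a => ⟨C0Aux.compact_mul_left a, C0Aux.compact_mul_right a⟩
  · intro a
    constructor
    · have : (fun b : C₀(ℕ, ℂ) => ((2:ℂ) • ContinuousLinearMap.id ℂ C₀(ℕ, ℂ)) a *
          ((2:ℂ) • ContinuousLinearMap.id ℂ C₀(ℕ, ℂ)) b -
          ((2:ℂ) • ContinuousLinearMap.id ℂ C₀(ℕ, ℂ)) (a * b)) = fun b => ((2:ℂ) • a) * b := by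
        funext b
        show (2:ℂ) • a * ((2:ℂ) • b) - (2:ℂ) • (a * b) = ((2:ℂ) • a) * b
        rw [smul_mul_assoc, mul_smul_comm, smul_smul, smul_mul_assoc]
        rw [show ((2:ℂ) * 2) = 2 + 2 by norm_num, add_smul]
        abel
      rw [this]
      exact C0Aux.compact_mul_left ((2:ℂ) • a)
    · have : (fun b : C₀(ℕ, ℂ) => ((2:ℂ) • ContinuousLinearMap.id ℂ C₀(ℕ, ℂ)) b *
          ((2:ℂ) • ContinuousLinearMap.id ℂ C₀(ℕ, ℂ)) a -
          ((2:ℂ) • ContinuousLinearMap.id ℂ C₀(ℕ, ℂ)) (b * a)) = fun b => ((2:ℂ) • a) * b := by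
        funext b
        show (2:ℂ) • b * ((2:ℂ) • a) - (2:ℂ) • (b * a) = ((2:ℂ) • a) * b
        rw [smul_mul_assoc, mul_smul_comm, smul_smul, mul_comm b a, smul_mul_assoc]
        rw [show ((2:ℂ) * 2) = 2 + 2 by norm_num, add_smul]
        abel
      rw [this]
      exact C0Aux.compact_mul_left ((2:ℂ) • a)
  · intro a b
    show (2:ℂ) • a * ((2:ℂ) • b) - (2:ℂ) • (a * b) = (2:ℂ) • (a * b)
    rw [smul_mul_assoc, mul_smul_comm, smul_smul]
    rw [show ((2:ℂ) * 2) = 2 + 2 by norm_num, add_smul]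
    abel
  · intro hcomp
    set r : ℕ → ℝ := fun n => 1 - 1 / (n + 1) with hr
    have hr0 : ∀ n, 0 ≤ r n := by
      intro n
      have h1 : (1 : ℝ) / (n + 1) ≤ 1 := by
        rw [div_le_one (by positivity)]
        have := Nat.cast_nonneg (α := ℝ) n
        linarith
      simp only [hr]
      linarith
    have hr1 : ∀ n, r n < 1 := by
      intro n
      have h1 : (0 : ℝ) < 1 / (n + 1) := by positivity
      simp only [hr]
      linarith
    have hrlim : Tendsto r atTop (𝓝 1) := by
      have hc : Tendsto (fun _ : ℕ => (1:ℝ)) atTop (𝓝 1) := tendsto_const_nhds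
      have h := hc.sub tendsto_one_div_add_atTop_nhds_zero_nat
      rw [hr]
      simpa [one_div] using h
    set χ : ℕ → C₀(ℕ, ℂ) := fun n => C0Aux.finseq (n + 1) (fun _ => 1) with hχ
    set a : ℕ → C₀(ℕ, ℂ) := fun n => ((r n : ℝ) : ℂ) • χ n with ha
    have hamem : ∀ n, a n ∈ ball (0 : C₀(ℕ, ℂ)) 1 := by
      intro n
      rw [mem_ball, dist_zero_right]
      have hχn : ‖χ n‖ ≤ 1 := by
        refine C0Aux.norm_le_of _ zero_le_one fun k => ?_
        simp only [hχ, C0Aux.finseq_apply]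
        split <;> simp
      have hle : ‖a n‖ ≤ r n := by
        refine C0Aux.norm_le_of _ (hr0 n) fun m => ?_
        rw [ha]
        show ‖((r n : ℝ) : ℂ) • (χ n) m‖ ≤ r n
        rw [smul_eq_mul, norm_mul, Complex.norm_real, Real.norm_eq_abs,
          abs_of_nonneg (hr0 n)]
        have hb : ‖(χ n) m‖ ≤ 1 := by
          rw [hχ]
          show ‖C0Aux.finseq (n + 1) (fun _ => 1) m‖ ≤ 1
          rw [C0Aux.finseq_apply]
          split <;> simp
        exact mul_le_of_le_one_right (hr0 n) hb
      exact lt_of_le_of_lt hle (hr1 n)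
    set x : ℕ → WeakSpace ℂ C₀(ℕ, ℂ) := fun n =>
      toWeakSpace ℂ C₀(ℕ, ℂ) (((2:ℂ) • ContinuousLinearMap.id ℂ C₀(ℕ, ℂ)) (a n) *
        ((2:ℂ) • ContinuousLinearMap.id ℂ C₀(ℕ, ℂ)) (a n) -
        ((2:ℂ) • ContinuousLinearMap.id ℂ C₀(ℕ, ℂ)) (a n * a n)) with hx
    have hle : Filter.map x atTop ≤ Filter.principal (closure ((toWeakSpace ℂ C₀(ℕ, ℂ)) ''
        (Set.image2 (fun a b => ((2:ℂ) • ContinuousLinearMap.id ℂ C₀(ℕ, ℂ)) a *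
            ((2:ℂ) • ContinuousLinearMap.id ℂ C₀(ℕ, ℂ)) b -
            ((2:ℂ) • ContinuousLinearMap.id ℂ C₀(ℕ, ℂ)) (a * b))
          (ball (0 : C₀(ℕ, ℂ)) 1) (ball (0 : C₀(ℕ, ℂ)) 1)))) := by
      rw [Filter.le_principal_iff, Filter.mem_map]
      refine Filter.Eventually.of_forall fun n => ?_
      exact subset_closure (Set.mem_image_of_mem _
        (Set.mem_image2_of_mem (hamem n) (hamem n)))
    obtain ⟨z, hzK, hcl⟩ := hcomp.exists_clusterPt hle
    have hzval : ∀ k : ℕ, ((toWeakSpace ℂ C₀(ℕ, ℂ)).symm z) k = 2 := by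
      intro k
      set g : WeakSpace ℂ C₀(ℕ, ℂ) → ℂ := fun w => C0Aux.evalC0 k ((toWeakSpace ℂ C₀(ℕ, ℂ)).symm w) with hg
      have hgc : Continuous g := WeakBilin.eval_continuous _ (C0Aux.evalC0 k)
      have htend : Tendsto (fun n => g (x n)) atTop (𝓝 2) := by
        have hC : Tendsto (fun n => ((r n : ℝ) : ℂ)) atTop (𝓝 1) := by
          have := (Complex.continuous_ofReal.tendsto 1).comp hrlim
          simpa [Function.comp_def] using this
        have hlim2 : Tendsto (fun n => (2:ℂ) * (((r n : ℝ):ℂ) * ((r n : ℝ):ℂ)))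
            atTop (𝓝 2) := by
          have := (tendsto_const_nhds (x := (2:ℂ)) (f := atTop (α := ℕ))).mul (hC.mul hC)
          simpa using this
        refine hlim2.congr' ?_
        filter_upwards [eventually_ge_atTop k] with n hn
        have hχk : (χ n) k = 1 := by
          rw [hχ]
          show C0Aux.finseq (n + 1) (fun _ => 1) k = 1
          rw [C0Aux.finseq_apply, dif_pos (Nat.lt_succ_of_le hn)]
        have hak : (a n) k = ((r n : ℝ) : ℂ) := by
          rw [ha]
          show ((r n : ℝ) : ℂ) • (χ n) k = ((r n : ℝ) : ℂ)
          rw [hχk, smul_eq_mul, mul_one]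
        have hgx : g (x n) = (((2:ℂ) • a n) * ((2:ℂ) • a n) - (2:ℂ) • (a n * a n) : C₀(ℕ, ℂ)) k := rfl
        rw [hgx]
        simp only [ZeroAtInftyContinuousMap.sub_apply, ZeroAtInftyContinuousMap.mul_apply,
          ZeroAtInftyContinuousMap.smul_apply, hak, smul_eq_mul]
        ring
      have hcl2 : ClusterPt (g z) (Filter.map (fun n => g (x n)) atTop) := by
        refine hcl.map hgc.continuousAt (f := g)
          (ly := Filter.map (fun n => g (x n)) atTop) ?_
        exact le_of_eq Filter.map_map
      have : g z = 2 := by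
        refine eq_of_nhds_neBot ?_
        exact (hcl2.mono htend)
      exact this
    set w : C₀(ℕ, ℂ) := (toWeakSpace ℂ C₀(ℕ, ℂ)).symm z with hw
    have h0 : Tendsto (fun n => w n) atTop (𝓝 0) := C0Aux.tendsto_coe_atTop w
    have h2 : Tendsto (fun n => w n) atTop (𝓝 (2:ℂ)) :=
      tendsto_const_nhds.congr fun n => (hzval n).symm
    exact two_ne_zero (tendsto_nhds_unique h2 h0)
end

section
/- Let A = ℓ∞(ℕ,ℂ) with pointwise multiplication and the supremum norm, and let B be the Banach algebra whose underlying space is M₂(ℂ) × ℓ∞(ℕ,ℂ) with product (M,a)(N,b) = (MN, ab) and norm ‖(M,a)‖ = max(‖M‖,‖a‖), where M₂(ℂ) is the algebra of 2×2 complex matrices with the operator norm. Define T : A → B by T((aₙ)ₙ) = ( [[a₀,a₁],[a₂,a₃]], (a₄,a₅,a₆,…) ), i.e. the first component is the 2×2 matrix formed from the first four terms of a and the second component is the sequence n ↦ a_{n+4}. Then T is a bounded linear bijection whose failure of multiplicativity S_T has finite-dimensional range (hence S_T is a compact bilinear map and T is a bounded cf-homomorphism with bounded cf-homomorphism inverse),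 yet A is commutative and B is not commutative, so A and B are not isomorphic as algebras. -/
open Metric
open scoped ENNReal

/-- The Banach algebra `B = M₂(ℂ) × ℓ∞(ℕ,ℂ)` of STATEMENT 17, where the `2×2` matrix algebra
is realised as the algebra of bounded operators on `ℓ²({1,2}) = EuclideanSpace ℂ (Fin 2)`
(with the operator norm), with componentwise product and max norm. -/
noncomputable abbrev StmtB : Type :=
  ((EuclideanSpace ℂ (Fin 2)) →L[ℂ] (EuclideanSpace ℂ (Fin 2))) × lp (fun _ : ℕ => ℂ) ∞

set_option maxHeartbeats 1000000
set_option synthInstance.maxHeartbeats 400000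

noncomputable section
namespace Stmt17

abbrev AA := lp (fun _ : ℕ => ℂ) ∞
abbrev E2 := EuclideanSpace ℂ (Fin 2)
abbrev CLM2 := E2 →L[ℂ] E2
abbrev M2 := Matrix (Fin 2) (Fin 2) ℂ
abbrev StmtB' : Type := CLM2 × AA

def evalL (n : ℕ) : AA →L[ℂ] ℂ :=
  LinearMap.mkContinuous
    { toFun := fun a => a n
      map_add' := fun a b => by simp [lp.coeFn_add]
      map_smul' := fun c a => by simp [lp.coeFn_smul] }
    1 (fun a => by show ‖a n‖ ≤ 1 * ‖a‖; simpa using lp.norm_apply_le_norm (by norm_num) a n)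

lemma evalL_apply (n : ℕ) (a : AA) : evalL n a = a n := rfl

lemma shift_mem (a : AA) : Memℓp (fun n => a (n + 4)) ∞ :=
  memℓp_infty ⟨‖a‖, by rintro x ⟨n, rfl⟩; exact lp.norm_apply_le_norm (by norm_num) a (n+4)⟩

def Tshift : AA →ₗ[ℂ] AA where
  toFun a := ⟨fun n => a (n + 4), shift_mem a⟩
  map_add' a b := by apply lp.ext; funext n; simp [lp.coeFn_add]; rfl
  map_smul' c a := by apply lp.ext; funext n; simp [lp.coeFn_smul]

lemma Tshift_apply (a : AA) (n : ℕ) : Tshift a n = a (n + 4) := rfl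

lemma norm_Tshift_le (a : AA) : ‖Tshift a‖ ≤ ‖a‖ :=
  lp.norm_le_of_forall_le (norm_nonneg a) fun n =>
    lp.norm_apply_le_norm (by norm_num) a (n + 4)

def matOf (a : AA) : M2 := !![a 0, a 1; a 2, a 3]

lemma matOf_add (a b : AA) : matOf (a + b) = matOf a + matOf b := by
  unfold matOf
  ext i j
  fin_cases i <;> fin_cases j <;> simp [lp.coeFn_add]

lemma matOf_smul (c : ℂ) (a : AA) : matOf (c • a) = c • matOf a := by
  unfold matOf
  ext i j
  fin_cases i <;> fin_cases j <;> simp [lp.coeFn_smul]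

def φ : M2 →ₗ[ℂ] CLM2 where
  toFun M := Matrix.toEuclideanCLM (𝕜 := ℂ) M
  map_add' M N := map_add _ M N
  map_smul' c M := map_smul _ c M

def Tmat : AA →ₗ[ℂ] CLM2 where
  toFun a := Matrix.toEuclideanCLM (𝕜 := ℂ) (matOf a)
  map_add' a b := by rw [matOf_add]; exact map_add _ _ _
  map_smul' c a := by rw [matOf_smul]; exact map_smul _ _ _

lemma cont_Tmat : Continuous (Tmat : AA → CLM2) := by
  have h1 : Continuous fun a : AA => matOf a := by
    apply continuous_matrix
    intro i j
    fin_cases i <;> fin_cases j <;> exact (evalL _).continuous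
  exact φ.continuous_of_finiteDimensional.comp h1


def T0 : AA →ₗ[ℂ] StmtB' := Tmat.prod Tshift

def T : AA →L[ℂ] StmtB' :=
  ⟨T0, (cont_Tmat.prodMk (LinearMap.mkContinuous Tshift 1
    (fun a => by simpa using norm_Tshift_le a)).continuous : Continuous T0)⟩

lemma T_fst (a : AA) : (T a).1 = Matrix.toEuclideanCLM (𝕜 := ℂ) !![a 0, a 1; a 2, a 3] := rfl
lemma T_snd (a : AA) (n : ℕ) : (T a).2 n = a (n + 4) := rfl

def mOf (x : StmtB') : M2 := (Matrix.toEuclideanCLM (n := Fin 2) (𝕜 := ℂ)).symm x.1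

def g (x : StmtB') : ℕ → ℂ
  | 0 => mOf x 0 0
  | 1 => mOf x 0 1
  | 2 => mOf x 1 0
  | 3 => mOf x 1 1
  | (n+4) => x.2 n

lemma g_mem (x : StmtB') : Memℓp (g x) ∞ := by
  apply memℓp_infty
  refine ⟨max (max (max (max ‖mOf x 0 0‖ ‖mOf x 0 1‖) ‖mOf x 1 0‖) ‖mOf x 1 1‖) ‖x.2‖, ?_⟩
  rintro r ⟨n, rfl⟩
  match n with
  | 0 => simp [g]
  | 1 => simp [g]
  | 2 => simp [g]
  | 3 => simp [g]
  | (n+4) =>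
    simp only [g]
    exact le_max_of_le_right (lp.norm_apply_le_norm (by norm_num) x.2 n)

def Tinv (x : StmtB') : AA := ⟨g x, g_mem x⟩

lemma T_Tinv (x : StmtB') : T (Tinv x) = x := by
  refine Prod.ext ?_ ?_
  · rw [T_fst]
    have : !![(Tinv x) 0, (Tinv x) 1; (Tinv x) 2, (Tinv x) 3] = mOf x := by
      rw [Matrix.eta_fin_two (mOf x)]
      rfl
    rw [this]
    exact (Matrix.toEuclideanCLM (n := Fin 2) (𝕜 := ℂ)).apply_symm_apply x.1
  · apply lp.ext
    funext n
    rfl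

lemma Tinv_T (a : AA) : Tinv (T a) = a := by
  apply lp.ext
  funext n
  have hm : mOf (T a) = matOf a :=
    (Matrix.toEuclideanCLM (n := Fin 2) (𝕜 := ℂ)).symm_apply_apply (matOf a)
  match n with
  | 0 => show mOf (T a) 0 0 = a 0; rw [hm]; rfl
  | 1 => show mOf (T a) 0 1 = a 1; rw [hm]; rfl
  | 2 => show mOf (T a) 1 0 = a 2; rw [hm]; rfl
  | 3 => show mOf (T a) 1 1 = a 3; rw [hm]; rfl
  | (n+4) => rfl

lemma T_bij : Function.Bijective T :=
  Function.bijective_iff_has_inverse.2 ⟨Tinv, Tinv_T, T_Tinv⟩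

-- compactness auxiliary lemmas
lemma compact_aux {F : Type*} [NormedAddCommGroup F] [NormedSpace ℂ F]
    (V : Submodule ℂ F) [FiniteDimensional ℂ V] {s : Set F}
    (hsV : ∀ x ∈ s, x ∈ V) {R : ℝ} (hR : ∀ x ∈ s, ‖x‖ ≤ R) :
    IsCompact (closure s) := by
  have hK : IsCompact (Subtype.val '' (closedBall (0 : V) R)) :=
    (isCompact_closedBall _ _).image continuous_subtype_val
  refine hK.of_isClosed_subset isClosed_closure (closure_minimal ?_ hK.isClosed)
  intro x hx
  exact ⟨⟨x, hsV x hx⟩, by simpa [dist_eq_norm, Submodule.coe_norm] using hR x hx, rfl⟩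

lemma S_compact {E F : Type*} [NonUnitalNormedRing E] [NonUnitalNormedRing F]
    [NormedSpace ℂ E] [NormedSpace ℂ F]
    (T : E →L[ℂ] F) (V : Submodule ℂ F) [FiniteDimensional ℂ V]
    (hV : ∀ a b : E, T a * T b - T (a * b) ∈ V) :
    IsCompact (closure (Set.image2 (fun a b => T a * T b - T (a * b))
      (ball (0 : E) 1) (ball (0 : E) 1))) := by
  apply compact_aux V (R := ‖T‖ * ‖T‖ + ‖T‖)
  · rintro x ⟨a, _, b, _, rfl⟩; exact hV a b
  · rintro x ⟨a, ha, b, hb, rfl⟩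
    have ha1 : ‖a‖ ≤ 1 := le_of_lt (by simpa [dist_eq_norm] using ha)
    have hb1 : ‖b‖ ≤ 1 := le_of_lt (by simpa [dist_eq_norm] using hb)
    have hTa : ‖T a‖ ≤ ‖T‖ := by
      have := T.le_opNorm a
      nlinarith [norm_nonneg (T : E →L[ℂ] F)]
    have hTb : ‖T b‖ ≤ ‖T‖ := by
      have := T.le_opNorm b
      nlinarith [norm_nonneg (T : E →L[ℂ] F)]
    have hTab : ‖T (a * b)‖ ≤ ‖T‖ := by
      have h3 : ‖a * b‖ ≤ 1 :=
        le_trans (norm_mul_le a b) (mul_le_one₀ ha1 (norm_nonneg b) hb1)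
      calc ‖T (a * b)‖ ≤ ‖T‖ * ‖a * b‖ := T.le_opNorm _
      _ ≤ ‖T‖ * 1 := mul_le_mul_of_nonneg_left h3 (norm_nonneg _)
      _ = ‖T‖ := mul_one _
    calc ‖T a * T b - T (a * b)‖ ≤ ‖T a * T b‖ + ‖T (a * b)‖ := norm_sub_le _ _
    _ ≤ ‖T a‖ * ‖T b‖ + ‖T (a * b)‖ := add_le_add (norm_mul_le _ _) le_rfl
    _ ≤ ‖T‖ * ‖T‖ + ‖T‖ :=
        add_le_add (mul_le_mul hTa hTb (norm_nonneg _) (norm_nonneg _)) hTab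


-- the defect of T lives in CLM2 × {0}
def VT : Submodule ℂ StmtB' := LinearMap.range (LinearMap.inl ℂ CLM2 AA)

instance : FiniteDimensional ℂ VT := LinearMap.finiteDimensional_range _

lemma ST_mem (a b : AA) : T a * T b - T (a * b) ∈ VT := by
  refine ⟨(T a * T b - T (a * b)).1, Prod.ext rfl ?_⟩
  show (0 : AA) = (T a * T b - T (a * b)).2
  have : (T (a * b)).2 = (T a).2 * (T b).2 := by
    apply lp.ext
    funext n
    have h1 : (T (a * b)).2 n = (a * b) (n + 4) := rfl
    have h2 : ((T a).2 * (T b).2) n = (T a).2 n * (T b).2 n := by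
      rw [lp.infty_coeFn_mul]; rfl
    rw [h1, h2, lp.infty_coeFn_mul]
    rfl
  have hsnd : (T a * T b - T (a * b)).2 = (T a).2 * (T b).2 - (T (a * b)).2 := rfl
  rw [hsnd, this, sub_self]

-- embedding of M2 into AA supported on first four coordinates
def embFun (M : M2) : ℕ → ℂ
  | 0 => M 0 0
  | 1 => M 0 1
  | 2 => M 1 0
  | 3 => M 1 1
  | (_+4) => 0

lemma embFun_mem (M : M2) : Memℓp (embFun M) ∞ := by
  apply memℓp_infty
  refine ⟨max (max (max ‖M 0 0‖ ‖M 0 1‖) ‖M 1 0‖) ‖M 1 1‖, ?_⟩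
  rintro r ⟨n, rfl⟩
  match n with
  | 0 => simp [embFun]
  | 1 => simp [embFun]
  | 2 => simp [embFun]
  | 3 => simp [embFun]
  | (n+4) => simp [embFun, le_max_iff, norm_nonneg]

def emb : M2 →ₗ[ℂ] AA where
  toFun M := ⟨embFun M, embFun_mem M⟩
  map_add' M N := by
    apply lp.ext
    funext n
    have : (⇑(⟨embFun (M + N), embFun_mem _⟩ : AA)) n = embFun (M + N) n := rfl
    match n with
    | 0 => show embFun (M + N) 0 = embFun M 0 + embFun N 0; simp [embFun]
    | 1 => show embFun (M + N) 1 = embFun M 1 + embFun N 1; simp [embFun]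
    | 2 => show embFun (M + N) 2 = embFun M 2 + embFun N 2; simp [embFun]
    | 3 => show embFun (M + N) 3 = embFun M 3 + embFun N 3; simp [embFun]
    | (n+4) => show embFun (M + N) (n+4) = embFun M (n+4) + embFun N (n+4); simp [embFun]
  map_smul' c M := by
    apply lp.ext
    funext n
    match n with
    | 0 => show embFun (c • M) 0 = c • embFun M 0; simp [embFun]
    | 1 => show embFun (c • M) 1 = c • embFun M 1; simp [embFun]
    | 2 => show embFun (c • M) 2 = c • embFun M 2; simp [embFun]
    | 3 => show embFun (c • M) 3 = c • embFun M 3; simp [embFun]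
    | (n+4) => show embFun (c • M) (n+4) = c • embFun M (n+4); simp [embFun]

def VT' : Submodule ℂ AA := LinearMap.range emb

instance : FiniteDimensional ℂ VT' := LinearMap.finiteDimensional_range _

lemma mem_VT'_of (w : AA) (h4 : ∀ n : ℕ, w (n + 4) = 0) : w ∈ VT' := by
  refine ⟨!![w 0, w 1; w 2, w 3], ?_⟩
  apply lp.ext
  funext n
  match n with
  | 0 => show embFun !![w 0, w 1; w 2, w 3] 0 = w 0; simp [embFun]
  | 1 => show embFun !![w 0, w 1; w 2, w 3] 1 = w 1; simp [embFun]
  | 2 => show embFun !![w 0, w 1; w 2, w 3] 2 = w 2; simp [embFun]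
  | 3 => show embFun !![w 0, w 1; w 2, w 3] 3 = w 3; simp [embFun]
  | (n+4) => show embFun !![w 0, w 1; w 2, w 3] (n+4) = w (n+4); simp [embFun, h4 n]

def Tequiv : AA ≃L[ℂ] StmtB' :=
  ContinuousLinearEquiv.ofBijective T
    (LinearMap.ker_eq_bot_of_injective T_bij.injective)
    (LinearMap.range_eq_top.mpr T_bij.surjective)

def T' : StmtB' →L[ℂ] AA := (Tequiv.symm : StmtB' →L[ℂ] AA)

lemma T_T' (x : StmtB') : T (T' x) = x := by
  have h1 : Tequiv (Tequiv.symm x) = x := Tequiv.apply_symm_apply x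
  have h2 : ⇑Tequiv = ⇑T := ContinuousLinearEquiv.coeFn_ofBijective _ _ _
  rw [← h2]
  exact h1

lemma T'_T (a : AA) : T' (T a) = a := by
  have h2 : ⇑Tequiv = ⇑T := ContinuousLinearEquiv.coeFn_ofBijective _ _ _
  show Tequiv.symm (T a) = a
  rw [← h2]
  exact Tequiv.symm_apply_apply a

lemma T'_eq (x : StmtB') : T' x = Tinv x := by
  conv_rhs => rw [← T_T' x]
  rw [Tinv_T]

lemma ST'_mem (x y : StmtB') : T' x * T' y - T' (x * y) ∈ VT' := by
  apply mem_VT'_of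
  intro n
  have hsub : (T' x * T' y - T' (x * y)) (n + 4)
      = (T' x * T' y) (n + 4) - (T' (x * y)) (n + 4) := by
    rw [lp.coeFn_sub]; rfl
  have hmul : (T' x * T' y) (n + 4) = T' x (n + 4) * T' y (n + 4) := by
    rw [lp.infty_coeFn_mul]; rfl
  have hx : T' x (n + 4) = x.2 n := by rw [T'_eq]; rfl
  have hy : T' y (n + 4) = y.2 n := by rw [T'_eq]; rfl
  have hxy : T' (x * y) (n + 4) = x.2 n * y.2 n := by
    rw [T'_eq]
    show (x * y).2 n = x.2 n * y.2 n
    have : (x * y).2 = x.2 * y.2 := rfl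
    rw [this, lp.infty_coeFn_mul]
    rfl
  rw [hsub, hmul, hx, hy, hxy, sub_self]

lemma not_comm : ¬ (∀ x y : StmtB', x * y = y * x) := by
  intro h
  set P : M2 := !![0, 1; 0, 0] with hP
  set Q : M2 := !![0, 0; 1, 0] with hQ
  have h1 := h (Matrix.toEuclideanCLM (𝕜 := ℂ) P, 0) (Matrix.toEuclideanCLM (𝕜 := ℂ) Q, 0)
  have hPQ := map_mul (Matrix.toEuclideanCLM (n := Fin 2) (𝕜 := ℂ)) P Q
  have hQP := map_mul (Matrix.toEuclideanCLM (n := Fin 2) (𝕜 := ℂ)) Q P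
  have h2 : Matrix.toEuclideanCLM (𝕜 := ℂ) (P * Q) = Matrix.toEuclideanCLM (𝕜 := ℂ) (Q * P) :=
    hPQ.trans ((congrArg Prod.fst h1).trans hQP.symm)
  have h3 := (Matrix.toEuclideanCLM (n := Fin 2) (𝕜 := ℂ)).injective h2
  have h4 := congrFun (congrFun h3 0) 0
  simp [hP, hQ, Matrix.mul_apply, Fin.sum_univ_two] at h4

lemma comm_AA (a b : AA) : a * b = b * a := mul_comm a b

lemma no_algequiv : IsEmpty (AA ≃ₐ[ℂ] StmtB') := by
  refine ⟨fun e => not_comm fun x y => ?_⟩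
  calc x * y = e (e.symm x) * e (e.symm y) := by
        rw [e.apply_symm_apply, e.apply_symm_apply]
  _ = e (e.symm x * e.symm y) := (map_mul e _ _).symm
  _ = e (e.symm y * e.symm x) := by rw [comm_AA]
  _ = e (e.symm y) * e (e.symm x) := map_mul e _ _
  _ = y * x := by rw [e.apply_symm_apply, e.apply_symm_apply]

end Stmt17
end

/-- the map `T : ℓ∞(ℕ,ℂ) → M₂(ℂ) × ℓ∞(ℕ,ℂ)`,
`T((aₙ)) = ([[a₀,a₁],[a₂,a₃]], (a₄,a₅,…))`, is a bounded linear bijection whose failure of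
multiplicativity has range in a finite-dimensional subspace (hence is a compact bilinear map,
and `T` is a bounded cf-homomorphism with a bounded cf-homomorphism inverse), yet
`A = ℓ∞(ℕ,ℂ)` is commutative, `B` is not, and `A` and `B` are not isomorphic as algebras. -/
theorem linfty_matrix_cf_isomorphism_example :
    ∃ T : lp (fun _ : ℕ => ℂ) ∞ →L[ℂ] StmtB,
      (∀ a : lp (fun _ : ℕ => ℂ) ∞,
        (T a).1 = Matrix.toEuclideanCLM (𝕜 := ℂ) !![a 0, a 1; a 2, a 3] ∧
        ∀ n : ℕ, (T a).2 n = a (n + 4)) ∧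
      Function.Bijective T ∧
      (∃ V : Submodule ℂ StmtB, FiniteDimensional ℂ V ∧
        ∀ a b : lp (fun _ : ℕ => ℂ) ∞, T a * T b - T (a * b) ∈ V) ∧
      IsCompact (closure (Set.image2 (fun a b => T a * T b - T (a * b))
        (ball (0 : lp (fun _ : ℕ => ℂ) ∞) 1) (ball (0 : lp (fun _ : ℕ => ℂ) ∞) 1))) ∧
      (∃ T' : StmtB →L[ℂ] lp (fun _ : ℕ => ℂ) ∞,
        (∀ a, T' (T a) = a) ∧ (∀ x, T (T' x) = x) ∧
        IsCompact (closure (Set.image2 (fun x y => T' x * T' y - T' (x * y))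
          (ball (0 : StmtB) 1) (ball (0 : StmtB) 1)))) ∧
      (∀ a b : lp (fun _ : ℕ => ℂ) ∞, a * b = b * a) ∧
      ¬ (∀ x y : StmtB, x * y = y * x) ∧
      IsEmpty (lp (fun _ : ℕ => ℂ) ∞ ≃ₐ[ℂ] StmtB) := by
  exact ⟨Stmt17.T, fun a => ⟨rfl, fun n => rfl⟩, Stmt17.T_bij,
    ⟨Stmt17.VT, inferInstance, Stmt17.ST_mem⟩,
    Stmt17.S_compact Stmt17.T Stmt17.VT Stmt17.ST_mem,
    ⟨Stmt17.T', Stmt17.T'_T, Stmt17.T_T',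
      Stmt17.S_compact Stmt17.T' Stmt17.VT' Stmt17.ST'_mem⟩,
    Stmt17.comm_AA, Stmt17.not_comm, Stmt17.no_algequiv⟩
end
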